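/- arXiv:1211.1245 — 2 statements merged into one kernel-verified Lean document; each statement's English description precedes it below -/
import Mathlib

section
/- Assume the critical value is 0. The Mañé matrix Φ verifies: (i) Φ_{i,j}(y,x) is finite for all i,j,x,y and Lipschitz continuous (in all variables); (ii) for every (y,j) ∈ T^N×{1,…,m}, the function Φ_{·,j}(y,·) belongs to H(0); (iii) for every (y,j) and every v ∈ H(0), v(x) − v_j(y)𝟙 ≤ Φ_{·,j}(y,x) componentwise for all x ∈ T^N, i.e. Φ_{·,j}(y,·) is the maximal critical subsolution whose j-th component vanishes at y; (iv) the triangle inequality Φ_{i,k}(x,z) ≤ Φ_{j,k}(x,y) + Φ_{i,j}(y,z) holds for all i,j,k ∈ {1,…,m} and x,y,z ∈ T^N. -/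
open Filter MeasureTheory

noncomputable section

/-- We model the flat torus `T^N = ℝ^N/ℤ^N` by working with `ℤ^N`-periodic
functions on `Euc N = ℝ^N` (with the Euclidean structure). -/
abbrev Euc (N : ℕ) := EuclideanSpace ℝ (Fin N)

/-- The vector of `ℝ^N` with integer coordinates `k`. -/
def intVec {N : ℕ} (k : Fin N → ℤ) : Euc N := WithLp.toLp 2 (fun i => (k i : ℝ))

/-- A function on `ℝ^N` is `ℤ^N`-periodic, i.e. descends to the torus. -/
def ZPeriodic {N : ℕ} {α : Type*} (f : Euc N → α) : Prop :=
  ∀ (x : Euc N) (k : Fin N → ℤ), f (x + intVec k) = f x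

/-- `b` is a coupling matrix: off-diagonal entries are nonpositive and
row sums are nonnegative. -/
def IsCouplingMat {m : ℕ} (b : Fin m → Fin m → ℝ) : Prop :=
  (∀ i j, j ≠ i → b i j ≤ 0) ∧ (∀ i, 0 ≤ ∑ j, b i j)

/-- `b` is degenerate: all row sums vanish. -/
def IsDegenerateMat {m : ℕ} (b : Fin m → Fin m → ℝ) : Prop :=
  ∀ i, ∑ j, b i j = 0

/-- `b` is irreducible: for every nonempty proper subset `I` of the indices
there are `i ∈ I` and `j ∉ I` with `b i j ≠ 0`. -/
def IsIrreducibleMat {m : ℕ} (b : Fin m → Fin m → ℝ) : Prop :=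
  ∀ I : Finset (Fin m), I.Nonempty → I ≠ Finset.univ → ∃ i ∈ I, ∃ j, j ∉ I ∧ b i j ≠ 0

/-- `H` is a convex Hamiltonian on the torus: continuous, convex in the momentum,
`ℤ^N`-periodic in the space variable, and coercive (uniformly in `x`). -/
def IsConvexHamiltonian {N : ℕ} (H : Euc N → Euc N → ℝ) : Prop :=
  Continuous (fun q : Euc N × Euc N => H q.1 q.2) ∧
  (∀ x : Euc N, ConvexOn ℝ Set.univ (H x)) ∧
  (∀ (x : Euc N) (k : Fin N → ℤ) (p : Euc N), H (x + intVec k) p = H x p) ∧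
  (∃ α β : ℝ → ℝ, Tendsto α atTop atTop ∧ Tendsto β atTop atTop ∧
    ∀ x p, α ‖p‖ ≤ H x p ∧ H x p ≤ β ‖p‖)

/-- `B` is a continuous field of irreducible degenerate coupling matrices
on the torus. -/
def IsCouplingField {N m : ℕ} (B : Euc N → Fin m → Fin m → ℝ) : Prop :=
  (∀ i j, Continuous fun x => B x i j) ∧
  (∀ i j, ZPeriodic fun x => B x i j) ∧
  (∀ x, IsCouplingMat (B x) ∧ IsDegenerateMat (B x) ∧ IsIrreducibleMat (B x))

/-- `u` is a viscosity subsolution of the weakly coupled system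
`H_i(x,Du_i) + (B(x)u(x))_i = a_i` on the torus. -/
def IsSubSol {N m : ℕ} (H : Fin m → Euc N → Euc N → ℝ) (B : Euc N → Fin m → Fin m → ℝ)
    (a : Fin m → ℝ) (u : Fin m → Euc N → ℝ) : Prop :=
  ∀ (i : Fin m) (x : Euc N) (φ : Euc N → ℝ), ContDiff ℝ 1 φ →
    IsLocalMax (fun y => u i y - φ y) x →
    H i x (gradient φ x) + ∑ j, B x i j * u j x ≤ a i

/-- `u` is a viscosity supersolution of the weakly coupled system
`H_i(x,Du_i) + (B(x)u(x))_i = a_i` on the torus. -/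
def IsSuperSol {N m : ℕ} (H : Fin m → Euc N → Euc N → ℝ) (B : Euc N → Fin m → Fin m → ℝ)
    (a : Fin m → ℝ) (u : Fin m → Euc N → ℝ) : Prop :=
  ∀ (i : Fin m) (x : Euc N) (φ : Euc N → ℝ), ContDiff ℝ 1 φ →
    IsLocalMin (fun y => u i y - φ y) x →
    a i ≤ H i x (gradient φ x) + ∑ j, B x i j * u j x

/-- The `i`-th equation subsolution property, restricted to a subset `U` of `ℝ^N`. -/
def SubSolIdxOn {N m : ℕ} (H : Fin m → Euc N → Euc N → ℝ) (B : Euc N → Fin m → Fin m → ℝ)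
    (i : Fin m) (U : Set (Euc N)) (u : Fin m → Euc N → ℝ) : Prop :=
  ∀ x ∈ U, ∀ φ : Euc N → ℝ, ContDiff ℝ 1 φ →
    IsLocalMax (fun y => u i y - φ y) x →
    H i x (gradient φ x) + ∑ j, B x i j * u j x ≤ 0

/-- The `i`-th equation supersolution property, restricted to a subset `U` of `ℝ^N`. -/
def SuperSolIdxOn {N m : ℕ} (H : Fin m → Euc N → Euc N → ℝ) (B : Euc N → Fin m → Fin m → ℝ)
    (i : Fin m) (U : Set (Euc N)) (u : Fin m → Euc N → ℝ) : Prop :=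
  ∀ x ∈ U, ∀ φ : Euc N → ℝ, ContDiff ℝ 1 φ →
    IsLocalMin (fun y => u i y - φ y) x →
    0 ≤ H i x (gradient φ x) + ∑ j, B x i j * u j x

/-- A continuous `ℝ^m`-valued function on the torus (componentwise continuous
and `ℤ^N`-periodic). -/
def IsTorusFun {N m : ℕ} (u : Fin m → Euc N → ℝ) : Prop :=
  (∀ i, Continuous (u i)) ∧ (∀ i, ZPeriodic (u i))

/-- The system with constant right-hand side `a` admits a continuous viscosity
subsolution. -/
def HasSubSol {N m : ℕ} (H : Fin m → Euc N → Euc N → ℝ) (B : Euc N → Fin m → Fin m → ℝ)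
    (a : ℝ) : Prop :=
  ∃ u : Fin m → Euc N → ℝ, IsTorusFun u ∧ IsSubSol H B (fun _ => a) u

/-- The set `H(0)` of critical subsolutions (the critical value being
assumed to be `0`). -/
def Crit {N m : ℕ} (H : Fin m → Euc N → Euc N → ℝ) (B : Euc N → Fin m → Fin m → ℝ) :
    Set (Fin m → Euc N → ℝ) :=
  {u | IsTorusFun u ∧ IsSubSol H B (fun _ => 0) u}

/-- The Mañé matrix `Φ_{i,j}(y,x) = sup_{v ∈ H(0)} (v_i(x) - v_j(y))`. -/
def Mane {N m : ℕ} (H : Fin m → Euc N → Euc N → ℝ) (B : Euc N → Fin m → Fin m → ℝ)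
    (i j : Fin m) (y x : Euc N) : ℝ :=
  sSup ((fun v : Fin m → Euc N → ℝ => v i x - v j y) '' Crit H B)

/-- The Aubry set: the set of points `y` such that the Mañé vector
`Φ_{·,i₀}(y,·)` is a critical (viscosity) solution on the whole torus; this is
independent of the index `i₀`. -/
def MAubry {N m : ℕ} (H : Fin m → Euc N → Euc N → ℝ) (B : Euc N → Fin m → Fin m → ℝ) :
    Set (Euc N) :=
  {y | ∀ i₀ : Fin m,
    IsSubSol H B (fun _ => 0) (fun l x => Mane H B l i₀ y x) ∧
    IsSuperSol H B (fun _ => 0) (fun l x => Mane H B l i₀ y x)}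

/-- The `i`-th component of a critical subsolution `v` is strict at `y`:
on some open neighbourhood `V` of `y` one has
`H_i(x,Dv_i(x)) + (B(x)v(x))_i ≤ -δ` for a.e. `x ∈ V`. -/
def StrictAt {N m : ℕ} (H : Fin m → Euc N → Euc N → ℝ) (B : Euc N → Fin m → Fin m → ℝ)
    (v : Fin m → Euc N → ℝ) (i : Fin m) (y : Euc N) : Prop :=
  ∃ V : Set (Euc N), IsOpen V ∧ y ∈ V ∧ ∃ δ : ℝ, 0 < δ ∧
    ∀ᵐ x ∂(volume : Measure (Euc N)), x ∈ V →
      DifferentiableAt ℝ (v i) x ∧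
      H i x (gradient (v i) x) + ∑ j, B x i j * v j x ≤ -δ

/-- `p` is a reachable gradient of `w` at `y`: a limit of gradients of `w`
along a sequence of differentiability points converging to `y`. -/
def ReachableGrad {N : ℕ} (w : Euc N → ℝ) (y : Euc N) (p : Euc N) : Prop :=
  ∃ z : ℕ → Euc N, (∀ n, DifferentiableAt ℝ w (z n)) ∧
    Tendsto z atTop (nhds y) ∧
    Tendsto (fun n => gradient w (z n)) atTop (nhds p)

namespace S9
open Filter

variable {N m : ℕ}

lemma norm_le_sqrt {y : Euc N} (h : ∀ i, |y i| ≤ 1) : ‖y‖ ≤ Real.sqrt N := by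
  rw [EuclideanSpace.norm_eq]
  apply Real.sqrt_le_sqrt
  calc ∑ i, ‖y i‖ ^ 2 ≤ ∑ _i : Fin N, 1 := by
        apply Finset.sum_le_sum
        intro i _
        have h1 : ‖y i‖ ≤ 1 := by have := h i; rwa [Real.norm_eq_abs]
        nlinarith [norm_nonneg (y i)]
    _ = N := by simp

lemma exists_rep (x : Euc N) : ∃ k : Fin N → ℤ, ‖x - intVec k‖ ≤ Real.sqrt N := by
  refine ⟨fun i => ⌊x i⌋, norm_le_sqrt fun i => ?_⟩
  have h1 : (x - intVec (fun i => ⌊x i⌋)) i = x i - ⌊x i⌋ := by simp [intVec]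
  rw [h1, abs_le]
  constructor <;> [linarith [Int.floor_le (x i)]; linarith [(Int.lt_floor_add_one (x i)).le]]

lemma periodic_eq_rep {α : Type*} {f : Euc N → α} (hp : ZPeriodic f) (x : Euc N)
    (k : Fin N → ℤ) : f x = f (x - intVec k) := by
  conv_lhs => rw [show x = (x - intVec k) + intVec k by abel]
  exact hp _ k

lemma periodic_bound {f : Euc N → ℝ} (hc : Continuous f) (hp : ZPeriodic f) :
    ∃ C : ℝ, 0 ≤ C ∧ ∀ x, |f x| ≤ C := by
  have hK : IsCompact (Metric.closedBall (0 : Euc N) (Real.sqrt N)) := isCompact_closedBall _ _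
  have hne : (Metric.closedBall (0 : Euc N) (Real.sqrt N)).Nonempty :=
    ⟨0, Metric.mem_closedBall_self (Real.sqrt_nonneg _)⟩
  obtain ⟨x₀, hx₀, hmax⟩ := hK.exists_isMaxOn hne ((continuous_abs.comp hc).continuousOn)
  refine ⟨|f x₀|, abs_nonneg _, fun x => ?_⟩
  obtain ⟨k, hk⟩ := exists_rep x
  rw [periodic_eq_rep hp x k]
  exact hmax (by simpa [Metric.mem_closedBall, dist_eq_norm] using hk)

lemma periodic_pos_inf {f : Euc N → ℝ} (hc : Continuous f) (hp : ZPeriodic f)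
    (hpos : ∀ x, 0 < f x) : ∃ ε : ℝ, 0 < ε ∧ ∀ x, ε ≤ f x := by
  have hK : IsCompact (Metric.closedBall (0 : Euc N) (Real.sqrt N)) := isCompact_closedBall _ _
  have hne : (Metric.closedBall (0 : Euc N) (Real.sqrt N)).Nonempty :=
    ⟨0, Metric.mem_closedBall_self (Real.sqrt_nonneg _)⟩
  obtain ⟨x₀, hx₀, hmin⟩ := hK.exists_isMinOn hne hc.continuousOn
  refine ⟨f x₀, hpos _, fun x => ?_⟩
  obtain ⟨k, hk⟩ := exists_rep x
  rw [periodic_eq_rep hp x k]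
  exact hmin (by simpa [Metric.mem_closedBall, dist_eq_norm] using hk)

lemma toDual_smul_eq (c : ℝ) (w : Euc N) :
    (InnerProductSpace.toDual ℝ (Euc N)) (c • w) = c • (innerSL ℝ w) := by
  ext z
  simp [InnerProductSpace.toDual_apply_apply, inner_smul_left]

lemma hasFDerivAt_normSq (y x : Euc N) :
    HasFDerivAt (fun z : Euc N => ‖z - y‖ ^ 2) ((2:ℝ) • (innerSL ℝ (x - y))) x := by
  have h := ((hasFDerivAt_id x).sub_const y).norm_sq
  refine h.congr_fderiv ?_
  ext z
  simp

lemma hasGradientAt_normSq (y x : Euc N) :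
    HasGradientAt (fun z : Euc N => ‖z - y‖ ^ 2) ((2:ℝ) • (x - y)) x := by
  rw [hasGradientAt_iff_hasFDerivAt, toDual_smul_eq]
  exact hasFDerivAt_normSq y x

lemma contDiff_normSq (y : Euc N) : ContDiff ℝ 1 (fun z : Euc N => ‖z - y‖ ^ 2) :=
  ContDiff.norm_sq ℝ (contDiff_id.sub contDiff_const)

lemma sqTest_contDiff (L η : ℝ) (hη : η ≠ 0) (y : Euc N) :
    ContDiff ℝ 1 (fun z : Euc N => L * Real.sqrt (‖z - y‖ ^ 2 + η ^ 2)) := by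
  apply ContDiff.mul contDiff_const
  apply ContDiff.sqrt ((contDiff_normSq y).add contDiff_const)
  intro z
  have h1 : 0 < ‖z - y‖ ^ 2 + η ^ 2 := by positivity
  linarith

lemma sqTest_hasGradientAt (L η : ℝ) (hη : η ≠ 0) (y z : Euc N) :
    HasGradientAt (fun z : Euc N => L * Real.sqrt (‖z - y‖ ^ 2 + η ^ 2))
      ((L / Real.sqrt (‖z - y‖ ^ 2 + η ^ 2)) • (z - y)) z := by
  have hS : 0 < ‖z - y‖ ^ 2 + η ^ 2 := by positivity
  have h1 : HasFDerivAt (fun w : Euc N => ‖w - y‖ ^ 2 + η ^ 2)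
      ((2:ℝ) • (innerSL ℝ (z - y))) z := (hasFDerivAt_normSq y z).add_const _
  have h2 : HasDerivAt Real.sqrt (1 / (2 * Real.sqrt (‖z - y‖ ^ 2 + η ^ 2)))
      (‖z - y‖ ^ 2 + η ^ 2) := Real.hasDerivAt_sqrt hS.ne'
  have h3 := h2.comp_hasFDerivAt z h1
  have h4 := h3.const_mul L
  rw [hasGradientAt_iff_hasFDerivAt, toDual_smul_eq]
  refine h4.congr_fderiv ?_
  have hs : Real.sqrt (‖z - y‖ ^ 2 + η ^ 2) ≠ 0 := (Real.sqrt_pos.2 hS).ne'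
  ext w
  simp only [ContinuousLinearMap.coe_smul', Pi.smul_apply, ContinuousLinearMap.smul_apply,
    smul_eq_mul]
  field_simp

lemma gradient_continuous {φ : Euc N → ℝ} (hφ : ContDiff ℝ 1 φ) :
    Continuous (fun x => gradient φ x) := by
  have h1 : Continuous (fderiv ℝ φ) := hφ.continuous_fderiv one_ne_zero
  exact ((InnerProductSpace.toDual ℝ (Euc N)).symm.continuous).comp h1

lemma gradient_add_normSq {φ : Euc N → ℝ} (hφ : ContDiff ℝ 1 φ) (x0 z : Euc N) :
    gradient (fun w => φ w + ‖w - x0‖ ^ 2) z = gradient φ z + (2:ℝ) • (z - x0) := by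
  have h1 : HasGradientAt φ (gradient φ z) z :=
    (hφ.differentiable one_ne_zero).differentiableAt.hasGradientAt
  have h2 := hasGradientAt_normSq x0 z
  have h3 : HasGradientAt (fun w => φ w + ‖w - x0‖ ^ 2)
      (gradient φ z + (2:ℝ) • (z - x0)) z := by
    rw [hasGradientAt_iff_hasFDerivAt] at h1 h2 ⊢
    have h4 := h1.add h2
    refine h4.congr_fderiv ?_
    simp [map_add]
  exact h3.gradient

end S9
namespace S9
open Filter

variable {N m : ℕ}

/-- Uniform lower bound on the Hamiltonians. -/
lemma exists_CH {H : Fin m → Euc N → Euc N → ℝ} (hH : ∀ i, IsConvexHamiltonian (H i)) :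
    ∃ CH : ℝ, 0 ≤ CH ∧ ∀ (i : Fin m) (x p : Euc N), -CH ≤ H i x p := by
  have key : ∀ i : Fin m, ∃ C : ℝ, 0 ≤ C ∧ ∀ x p, -C ≤ H i x p := by
    intro i
    obtain ⟨hc, _, hper, α, β, hα, hβ, hbd⟩ := hH i
    obtain ⟨R0, hR0⟩ := eventually_atTop.1 (hα.eventually_ge_atTop 0)
    set R := max R0 0 with hR
    have hK : IsCompact ((Metric.closedBall (0 : Euc N) (Real.sqrt N)) ×ˢ
        (Metric.closedBall (0 : Euc N) R)) :=
      (isCompact_closedBall _ _).prod (isCompact_closedBall _ _)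
    have hne : ((Metric.closedBall (0 : Euc N) (Real.sqrt N)) ×ˢ
        (Metric.closedBall (0 : Euc N) R)).Nonempty :=
      ⟨(0, 0), ⟨Metric.mem_closedBall_self (Real.sqrt_nonneg _),
        Metric.mem_closedBall_self (le_max_right _ _)⟩⟩
    obtain ⟨q₀, hq₀, hmin⟩ := hK.exists_isMinOn hne hc.continuousOn
    refine ⟨max (-(H i q₀.1 q₀.2)) 0, le_max_right _ _, fun x p => ?_⟩
    by_cases hp : ‖p‖ ≤ R
    · obtain ⟨k, hk⟩ := exists_rep x
      have hx : H i x p = H i (x - intVec k) p := by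
        conv_lhs => rw [show x = (x - intVec k) + intVec k by abel]
        exact hper _ k p
      rw [hx]
      have hmem : (x - intVec k, p) ∈ (Metric.closedBall (0 : Euc N) (Real.sqrt N)) ×ˢ
          (Metric.closedBall (0 : Euc N) R) := by
        constructor
        · simpa [Metric.mem_closedBall, dist_eq_norm] using hk
        · simpa [Metric.mem_closedBall, dist_eq_norm] using hp
      have h2 := hmin hmem
      have h3 : -(max (-(H i q₀.1 q₀.2)) 0) ≤ H i q₀.1 q₀.2 := by
        have h4 := le_max_left (-(H i q₀.1 q₀.2)) (0:ℝ)
        linarith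
      exact h3.trans h2
    · push_neg at hp
      have h1 : 0 ≤ α ‖p‖ := hR0 _ (le_trans (le_max_left _ _) hp.le)
      have h2 := (hbd x p).1
      have h3 : (0:ℝ) ≤ max (-(H i q₀.1 q₀.2)) 0 := le_max_right _ _
      linarith
  choose f hf0 hf using key
  refine ⟨∑ i, f i, Finset.sum_nonneg fun i _ => hf0 i, fun i x p => ?_⟩
  have h1 : f i ≤ ∑ i, f i := Finset.single_le_sum (fun i _ => hf0 i) (Finset.mem_univ i)
  linarith [hf i x p]

/-- Uniform coercivity: beyond radius `R`, all Hamiltonians exceed `C`. -/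
lemma exists_coercR {H : Fin m → Euc N → Euc N → ℝ} (hH : ∀ i, IsConvexHamiltonian (H i))
    (C : ℝ) : ∃ R : ℝ, 0 < R ∧ ∀ (i : Fin m) (x p : Euc N), R ≤ ‖p‖ → C < H i x p := by
  have key : ∀ i : Fin m, ∃ Ri : ℝ, ∀ (x p : Euc N), Ri ≤ ‖p‖ → C < H i x p := by
    intro i
    obtain ⟨hc, _, hper, α, β, hα, hβ, hbd⟩ := hH i
    obtain ⟨R0, hR0⟩ := eventually_atTop.1 (hα.eventually_gt_atTop C)
    exact ⟨R0, fun x p hp => lt_of_lt_of_le (hR0 _ hp) (hbd x p).1⟩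
  choose g hg using key
  refine ⟨1 + ∑ i, max (g i) 0, by positivity, fun i x p hp => ?_⟩
  apply hg i x p
  have h1 : max (g i) 0 ≤ ∑ i, max (g i) 0 :=
    Finset.single_le_sum (f := fun i => max (g i) 0) (fun i _ => le_max_right _ _)
      (Finset.mem_univ i)
  have h2 : g i ≤ max (g i) 0 := le_max_left _ _
  linarith

/-- Uniform bound on the coupling coefficients. -/
lemma exists_Cb {B : Euc N → Fin m → Fin m → ℝ} (hB : IsCouplingField B) :
    ∃ Cb : ℝ, 0 ≤ Cb ∧ ∀ (x : Euc N) (i j : Fin m), |B x i j| ≤ Cb := by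
  have key : ∀ i j : Fin m, ∃ C : ℝ, 0 ≤ C ∧ ∀ x, |B x i j| ≤ C := fun i j =>
    periodic_bound (hB.1 i j) (hB.2.1 i j)
  choose g hg0 hg using key
  refine ⟨∑ i, ∑ j, g i j, Finset.sum_nonneg fun i _ => Finset.sum_nonneg fun j _ => hg0 i j,
    fun x i j => ?_⟩
  have h1 : g i j ≤ ∑ j, g i j :=
    Finset.single_le_sum (fun j _ => hg0 i j) (Finset.mem_univ j)
  have h2 : ∑ j, g i j ≤ ∑ i, ∑ j, g i j :=
    Finset.single_le_sum (fun i _ => Finset.sum_nonneg fun j _ => hg0 i j) (Finset.mem_univ i)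
  linarith [hg i j x]

/-- Uniform irreducibility constant. -/
lemma exists_eps {B : Euc N → Fin m → Fin m → ℝ} (hB : IsCouplingField B) :
    ∃ ε : ℝ, 0 < ε ∧ ∀ I : Finset (Fin m), I.Nonempty → I ≠ Finset.univ →
      ∀ x, ε ≤ ∑ i ∈ I, ∑ j ∈ Iᶜ, (-B x i j) := by
  have key : ∀ I : Finset (Fin m), ∃ e : ℝ, 0 < e ∧ (I.Nonempty → I ≠ Finset.univ →
      ∀ x, e ≤ ∑ i ∈ I, ∑ j ∈ Iᶜ, (-B x i j)) := by
    intro I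
    by_cases hI : I.Nonempty ∧ I ≠ Finset.univ
    · obtain ⟨hI1, hI2⟩ := hI
      have hc : Continuous (fun x => ∑ i ∈ I, ∑ j ∈ Iᶜ, (-B x i j)) := by
        apply continuous_finset_sum
        intro i _
        exact continuous_finset_sum _ fun j _ => (hB.1 i j).neg
      have hp : ZPeriodic (fun x => ∑ i ∈ I, ∑ j ∈ Iᶜ, (-B x i j)) := by
        intro x k
        simp only
        congr 1
        ext i
        congr 1
        ext j
        exact congrArg Neg.neg (hB.2.1 i j x k)
      have hpos : ∀ x, 0 < ∑ i ∈ I, ∑ j ∈ Iᶜ, (-B x i j) := by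
        intro x
        obtain ⟨i0, hi0, j0, hj0, hne0⟩ := (hB.2.2 x).2.2 I hI1 hI2
        have hterm : ∀ i ∈ I, ∀ j ∈ Iᶜ, 0 ≤ -B x i j := by
          intro i hi j hj
          have hji : j ≠ i := fun h => (Finset.mem_compl.1 hj) (h ▸ hi)
          linarith [(hB.2.2 x).1.1 i j hji]
        have hpos0 : 0 < -B x i0 j0 := by
          have hji : j0 ≠ i0 := fun h => hj0 (h ▸ hi0)
          have := (hB.2.2 x).1.1 i0 j0 hji
          rcases lt_or_eq_of_le this with h | h
          · linarith
          · exact absurd h hne0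
        have h1 : 0 < ∑ j ∈ Iᶜ, (-B x i0 j) := by
          apply Finset.sum_pos' (fun j hj => hterm i0 hi0 j hj)
          exact ⟨j0, Finset.mem_compl.2 hj0, hpos0⟩
        apply Finset.sum_pos' (fun i hi => Finset.sum_nonneg fun j hj => hterm i hi j hj)
        exact ⟨i0, hi0, h1⟩
      obtain ⟨e, he, hle⟩ := periodic_pos_inf hc hp hpos
      exact ⟨e, he, fun _ _ => hle⟩
    · exact ⟨1, one_pos, fun h1 h2 => absurd ⟨h1, h2⟩ hI⟩
  choose g hg using key
  have hne : (Finset.univ : Finset (Finset (Fin m))).Nonempty := ⟨∅, Finset.mem_univ _⟩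
  refine ⟨Finset.univ.inf' hne g, ?_, fun I h1 h2 x => ?_⟩
  · rw [Finset.lt_inf'_iff]
    exact fun I _ => (hg I).1
  · exact le_trans (Finset.inf'_le g (Finset.mem_univ I)) ((hg I).2 h1 h2 x)

end S9
namespace S9
open Filter

variable {N m : ℕ}

lemma tendsto_inv_nat : Tendsto (fun n : ℕ => (1:ℝ) / (n + 1)) atTop (nhds 0) :=
  tendsto_one_div_add_atTop_nhds_zero_nat

/-- Key pointwise bound: for any critical subsolution, the coupling term is
bounded above by `CH` everywhere. -/
lemma coupling_bound {H : Fin m → Euc N → Euc N → ℝ} {B : Euc N → Fin m → Fin m → ℝ}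
    (hB1 : ∀ i j, Continuous fun x => B x i j) {CH : ℝ}
    (hCH : ∀ (i : Fin m) (x p : Euc N), -CH ≤ H i x p)
    {v : Fin m → Euc N → ℝ} (hv : v ∈ Crit H B)
    (i : Fin m) (xh : Euc N) : ∑ j, B xh i j * v j xh ≤ CH := by
  obtain ⟨⟨hvc, hvp⟩, hsub⟩ := hv
  obtain ⟨Mv, hMv0, hMv⟩ := periodic_bound (hvc i) (hvp i)
  have key : ∀ n : ℕ, ∃ xn : Euc N, ‖xn - xh‖ ≤ Real.sqrt (2 * Mv / (n + 1)) ∧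
      ∑ j, B xn i j * v j xn ≤ CH := by
    intro n
    set lam : ℝ := 2 * Mv + 1 + n with hlam
    have hlampos : 0 < lam := by positivity
    set φ : Euc N → ℝ := fun z => lam * ‖z - xh‖ ^ 2 with hφ
    have hφc : ContDiff ℝ 1 φ := contDiff_const.mul (contDiff_normSq xh)
    have hfc : Continuous (fun z => v i z - φ z) := (hvc i).sub hφc.continuous
    obtain ⟨xn, hxnmem, hmax⟩ := (isCompact_closedBall xh 1).exists_isMaxOn
      ⟨xh, Metric.mem_closedBall_self one_pos.le⟩ hfc.continuousOn
    rw [isMaxOn_iff] at hmax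
    have hbase := hmax xh (Metric.mem_closedBall_self one_pos.le)
    have hxh0 : φ xh = 0 := by simp [hφ]
    have hd2 : lam * ‖xn - xh‖ ^ 2 ≤ 2 * Mv := by
      have h1 := hMv xn
      have h2 := hMv xh
      rw [hxh0] at hbase
      have := abs_le.1 h1
      have := abs_le.1 h2
      simp only [hφ] at hbase
      linarith [abs_le.1 h1, abs_le.1 h2]
    have hd2' : ‖xn - xh‖ ^ 2 ≤ 2 * Mv / (n + 1) := by
      rw [le_div_iff₀ (by positivity : (0:ℝ) < (n:ℝ) + 1)]
      have hn : (n:ℝ) + 1 ≤ lam := by simp [hlam]; linarith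
      nlinarith [sq_nonneg ‖xn - xh‖]
    have hlt1 : ‖xn - xh‖ < 1 := by
      by_contra hge
      push_neg at hge
      have hd1 : 1 ≤ ‖xn - xh‖ ^ 2 := by nlinarith
      have h2 : lam * 1 ≤ lam * ‖xn - xh‖ ^ 2 := mul_le_mul_of_nonneg_left hd1 hlampos.le
      have h3 : (0:ℝ) ≤ (n:ℝ) := Nat.cast_nonneg n
      rw [mul_one, hlam] at h2
      have hd3 := hd2
      rw [hlam] at hd3
      linarith
    have hloc : IsLocalMax (fun z => v i z - φ z) xn := by
      have hball : Metric.ball xh 1 ∈ nhds xn :=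
        Metric.isOpen_ball.mem_nhds (by simpa [Metric.mem_ball, dist_eq_norm] using hlt1)
      exact Filter.eventually_of_mem hball
        (fun z hz => hmax z (Metric.ball_subset_closedBall hz))
    have hvisc := hsub i xn φ hφc hloc
    refine ⟨xn, ?_, ?_⟩
    · have h6 := Real.sqrt_le_sqrt hd2'
      rwa [Real.sqrt_sq (norm_nonneg _)] at h6
    · have h5 := hCH i xn (gradient φ xn)
      simp only at hvisc
      linarith
  choose z hz1 hz2 using key
  have hzt : Tendsto z atTop (nhds xh) := by
    rw [tendsto_iff_dist_tendsto_zero]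
    have h1 : Tendsto (fun n : ℕ => 2 * Mv / (n + 1)) atTop (nhds 0) := by
      have h0 := tendsto_inv_nat.const_mul (2 * Mv)
      simpa [div_eq_mul_inv, mul_assoc] using h0
    have hgt : Tendsto (fun n : ℕ => Real.sqrt (2 * Mv / (n + 1))) atTop (nhds 0) := by
      have h2 := (Real.continuous_sqrt.tendsto 0).comp h1
      simpa [Function.comp_def] using h2
    exact squeeze_zero (fun n => dist_nonneg)
      (fun n => by rw [dist_eq_norm]; exact hz1 n) hgt
  have hg : Continuous (fun x => ∑ j, B x i j * v j x) :=
    continuous_finset_sum _ fun j _ => (hB1 i j).mul (hvc j)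
  exact le_of_tendsto ((hg.tendsto xh).comp hzt) (Filter.Eventually.of_forall hz2)

/-- Recursive bound used in the pointwise-spread estimate. -/
def Ebnd (a q : ℝ) : ℕ → ℝ
  | 0 => 0
  | t + 1 => Ebnd a q t + (a + q * Ebnd a q t)

lemma Ebnd_nonneg {a q : ℝ} (ha : 0 ≤ a) (hq : 0 ≤ q) : ∀ t, 0 ≤ Ebnd a q t := by
  intro t
  induction t with
  | zero => simp [Ebnd]
  | succ t ih => simp only [Ebnd]; nlinarith

lemma Ebnd_mono {a q : ℝ} (ha : 0 ≤ a) (hq : 0 ≤ q) : Monotone (Ebnd a q) := by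
  apply monotone_nat_of_le_succ
  intro t
  have := Ebnd_nonneg ha hq t
  simp only [Ebnd]
  nlinarith

/-- Pointwise spread estimate: at every point, the components of a vector
satisfying the coupling bound differ by at most a universal constant. -/
lemma spread {B : Euc N → Fin m → Fin m → ℝ} (hm : 0 < m)
    (hB : IsCouplingField B) {CH Cb ε : ℝ} (hCH : 0 ≤ CH) (hCb : 0 ≤ Cb) (hε : 0 < ε)
    (hCbB : ∀ (x : Euc N) (i j : Fin m), |B x i j| ≤ Cb)
    (hEps : ∀ I : Finset (Fin m), I.Nonempty → I ≠ Finset.univ →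
      ∀ x, ε ≤ ∑ i ∈ I, ∑ j ∈ Iᶜ, (-B x i j))
    (x : Euc N) (s : Fin m → ℝ) (hs : ∀ i, ∑ j, B x i j * s j ≤ CH) :
    ∀ i j, s i - s j ≤ Ebnd (m * CH / ε) (m ^ 2 * Cb / ε) m := by
  have : Nonempty (Fin m) := Fin.pos_iff_nonempty.1 hm
  set a := m * CH / ε with ha_def
  set q := m ^ 2 * Cb / ε with hq_def
  have ha : 0 ≤ a := by positivity
  have hq : 0 ≤ q := by positivity
  obtain ⟨i0, hi0⟩ := Finite.exists_max s
  -- rewritten coupling bound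
  have hs' : ∀ i, ∑ j, B x i j * (s j - s i) ≤ CH := by
    intro i
    have hdeg : ∑ j, B x i j = 0 := (hB.2.2 x).2.1 i
    have : ∑ j, B x i j * (s j - s i) = (∑ j, B x i j * s j) - (∑ j, B x i j) * s i := by
      rw [Finset.sum_mul, ← Finset.sum_sub_distrib]
      congr 1; ext j; ring
    rw [this, hdeg]
    simpa using hs i
  have key : ∀ t : ℕ, ∃ I : Finset (Fin m), i0 ∈ I ∧
      (∀ i ∈ I, s i0 - s i ≤ Ebnd a q t) ∧ (I = Finset.univ ∨ t + 1 ≤ I.card) := by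
    intro t
    induction t with
    | zero =>
      refine ⟨{i0}, Finset.mem_singleton_self i0, ?_, Or.inr (by simp)⟩
      intro i hi
      rw [Finset.mem_singleton] at hi
      subst hi
      simp [Ebnd]
    | succ t ih =>
      obtain ⟨I, h1, h2, h3⟩ := ih
      have hEmono : Ebnd a q t ≤ Ebnd a q (t + 1) := Ebnd_mono ha hq (Nat.le_succ t)
      by_cases hIu : I = Finset.univ
      · exact ⟨I, h1, fun i hi => (h2 i hi).trans hEmono, Or.inl hIu⟩
      have hcard : t + 1 ≤ I.card := h3.resolve_left hIu
      have hcne : Iᶜ.Nonempty := by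
        rw [← Finset.card_pos, Finset.card_compl]
        have hlt := I.card_lt_iff_ne_univ.2 hIu
        omega
      obtain ⟨j', hj'c, hj'max⟩ := Finset.exists_max_image Iᶜ s hcne
      have hj'notI : j' ∉ I := Finset.mem_compl.1 hj'c
      have hEt := Ebnd_nonneg ha hq t
      -- main estimate : s i0 - s j' ≤ Ebnd a q (t+1)
      have hstep : s i0 - s j' ≤ Ebnd a q (t + 1) := by
        by_cases hd : s i0 - s j' ≤ Ebnd a q t
        · exact hd.trans hEmono
        push_neg at hd
        set δ := s i0 - s j' - Ebnd a q t with hδ_def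
        have hδpos : 0 < δ := by simp [hδ_def]; linarith
        -- sum the coupling bounds over I
        have hA : ∑ i ∈ I, ∑ j, B x i j * (s j - s i) ≤ m * CH := by
          calc ∑ i ∈ I, ∑ j, B x i j * (s j - s i) ≤ ∑ i ∈ I, CH :=
                Finset.sum_le_sum fun i _ => hs' i
            _ = I.card * CH := by rw [Finset.sum_const, nsmul_eq_mul]
            _ ≤ m * CH := by
                apply mul_le_mul_of_nonneg_right _ hCH
                have := Finset.card_le_univ I
                simp only [Finset.card_univ, Fintype.card_fin] at this
                exact_mod_cast this
        -- split each inner sum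
        have hsplit : ∀ i ∈ I, ∑ j, B x i j * (s j - s i) =
            (∑ j ∈ I, B x i j * (s j - s i)) + ∑ j ∈ Iᶜ, B x i j * (s j - s i) := by
          intro i _
          exact (Finset.sum_add_sum_compl I _).symm
        rw [Finset.sum_congr rfl hsplit, Finset.sum_add_distrib] at hA
        -- bound the intra-I part from below
        have hT1 : -(m * (m * (Cb * Ebnd a q t))) ≤
            ∑ i ∈ I, ∑ j ∈ I, B x i j * (s j - s i) := by
          have hterm : ∀ i ∈ I, ∀ j ∈ I, -(Cb * Ebnd a q t) ≤ B x i j * (s j - s i) := by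
            intro i hi j hj
            have hbi := h2 i hi
            have hbj := h2 j hj
            have hii0 := hi0 i
            have hji0 := hi0 j
            have habs : |s j - s i| ≤ Ebnd a q t := by
              rw [abs_le]; constructor <;> linarith
            have hBabs := hCbB x i j
            have h1 : |B x i j * (s j - s i)| ≤ Cb * Ebnd a q t := by
              rw [abs_mul]
              exact mul_le_mul hBabs habs (abs_nonneg _) hCb
            linarith [abs_le.1 h1]
          calc -(m * (m * (Cb * Ebnd a q t)))
              ≤ (I.card : ℝ) * ((I.card : ℝ) * (-(Cb * Ebnd a q t))) := by
                have hc : (I.card : ℝ) ≤ m := by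
                  have := Finset.card_le_univ I
                  simp only [Finset.card_univ, Fintype.card_fin] at this
                  exact_mod_cast this
                have hc0 : (0:ℝ) ≤ I.card := Nat.cast_nonneg _
                have h5 : (I.card : ℝ) * (I.card : ℝ) ≤ (m:ℝ) * m :=
                  mul_le_mul hc hc hc0 (hc0.trans hc)
                nlinarith [mul_nonneg hCb hEt]
            _ ≤ ∑ i ∈ I, ∑ j ∈ I, B x i j * (s j - s i) := by
                have h1 : ∀ i ∈ I, (I.card : ℝ) * (-(Cb * Ebnd a q t)) ≤
                    ∑ j ∈ I, B x i j * (s j - s i) := by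
                  intro i hi
                  calc (I.card : ℝ) * (-(Cb * Ebnd a q t))
                      = ∑ _j ∈ I, (-(Cb * Ebnd a q t)) := by
                        rw [Finset.sum_const, nsmul_eq_mul]
                    _ ≤ ∑ j ∈ I, B x i j * (s j - s i) :=
                        Finset.sum_le_sum fun j hj => hterm i hi j hj
                calc (I.card : ℝ) * ((I.card : ℝ) * (-(Cb * Ebnd a q t)))
                    = ∑ _i ∈ I, (I.card : ℝ) * (-(Cb * Ebnd a q t)) := by
                      rw [Finset.sum_const, nsmul_eq_mul]
                  _ ≤ _ := Finset.sum_le_sum h1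
        -- bound the cross part from below
        have hT2 : ε * δ ≤ ∑ i ∈ I, ∑ j ∈ Iᶜ, B x i j * (s j - s i) := by
          have hterm : ∀ i ∈ I, ∀ j ∈ Iᶜ, (-B x i j) * δ ≤ B x i j * (s j - s i) := by
            intro i hi j hj
            have hjI : j ∉ I := Finset.mem_compl.1 hj
            have hji : j ≠ i := fun h => hjI (h ▸ hi)
            have hBle : B x i j ≤ 0 := (hB.2.2 x).1.1 i j hji
            have hsj : s j ≤ s j' := hj'max j hj
            have hsi : s i0 - s i ≤ Ebnd a q t := h2 i hi
            have hgap : δ ≤ s i - s j := by simp only [hδ_def]; linarith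
            have h1 : B x i j * (s j - s i) = (-B x i j) * (s i - s j) := by ring
            rw [h1]
            exact mul_le_mul_of_nonneg_left hgap (by linarith)
          calc ε * δ ≤ (∑ i ∈ I, ∑ j ∈ Iᶜ, (-B x i j)) * δ :=
                mul_le_mul_of_nonneg_right (hEps I ⟨i0, h1⟩ hIu x) hδpos.le
            _ = ∑ i ∈ I, ∑ j ∈ Iᶜ, (-B x i j) * δ := by
                rw [Finset.sum_mul]
                congr 1; ext i
                rw [Finset.sum_mul]
            _ ≤ ∑ i ∈ I, ∑ j ∈ Iᶜ, B x i j * (s j - s i) :=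
                Finset.sum_le_sum fun i hi => Finset.sum_le_sum fun j hj => hterm i hi j hj
        -- combine
        have hcomb : ε * δ ≤ m * CH + m * (m * (Cb * Ebnd a q t)) := by linarith
        have hδle : δ ≤ a + q * Ebnd a q t := by
          have h6 : δ * ε ≤ ↑m * CH + ↑m ^ 2 * Cb * Ebnd a q t := by
            calc δ * ε = ε * δ := mul_comm _ _
              _ ≤ ↑m * CH + ↑m * (↑m * (Cb * Ebnd a q t)) := hcomb
              _ = ↑m * CH + ↑m ^ 2 * Cb * Ebnd a q t := by ring
          rw [ha_def, hq_def]
          calc δ = δ * ε / ε := by field_simp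
            _ ≤ (↑m * CH + ↑m ^ 2 * Cb * Ebnd a q t) / ε := (div_le_div_iff_of_pos_right hε).2 h6
            _ = ↑m * CH / ε + ↑m ^ 2 * Cb / ε * Ebnd a q t := by ring
        have hsum : s i0 - s j' = Ebnd a q t + δ := by simp [hδ_def]
        rw [hsum]
        show Ebnd a q t + δ ≤ Ebnd a q t + (a + q * Ebnd a q t)
        linarith
      refine ⟨insert j' I, Finset.mem_insert_of_mem h1, ?_, Or.inr ?_⟩
      · intro i hi
        rcases Finset.mem_insert.1 hi with h | h
        · subst h; exact hstep
        · exact (h2 i h).trans hEmono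
      · rw [Finset.card_insert_of_notMem hj'notI]
        omega
  obtain ⟨I, hI1, hI2, hI3⟩ := key m
  have hIuniv : I = Finset.univ := by
    rcases hI3 with h | h
    · exact h
    · exfalso
      have := Finset.card_le_univ I
      simp only [Finset.card_univ, Fintype.card_fin] at this
      omega
  intro i j
  have h1 : s i0 - s j ≤ Ebnd a q m := hI2 j (hIuniv ▸ Finset.mem_univ j)
  have h2 := hi0 i
  linarith

end S9
namespace S9
open Filter

variable {N m : ℕ}

/-- Equi-Lipschitz estimate for critical subsolutions. -/
lemma crit_lipschitz {H : Fin m → Euc N → Euc N → ℝ} {B : Euc N → Fin m → Fin m → ℝ}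
    {C2 R : ℝ} (hR0 : 0 < R)
    (hcoerc : ∀ (i : Fin m) (x p : Euc N), R ≤ ‖p‖ → C2 < H i x p)
    {v : Fin m → Euc N → ℝ} (hv : v ∈ Crit H B)
    (hBv : ∀ (i : Fin m) (x : Euc N), -C2 ≤ ∑ j, B x i j * v j x) :
    ∀ (i : Fin m) (x y : Euc N), v i x - v i y ≤ (R + 1) * ‖x - y‖ := by
  obtain ⟨⟨hvc, hvp⟩, hsub⟩ := hv
  intro i x y
  set K := R + 1 with hK
  have hK1 : 1 ≤ K := by simp [hK]; linarith
  have hKpos : 0 < K := by linarith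
  obtain ⟨Mv, hMv0, hMv⟩ := periodic_bound (hvc i) (hvp i)
  set η : ℕ → ℝ := fun n => (1 / K) * (1 / (n + 1)) with hη_def
  have hηpos : ∀ n, 0 < η n := fun n => by positivity
  set ρ : ℝ := 2 * Mv + 2 with hρ_def
  have hρpos : 0 < ρ := by positivity
  have key : ∀ n : ℕ, ∃ xb : Euc N, ‖xb - y‖ ≤ R * η n ∧
      ∀ x' : Euc N, v i x' ≤ K * Real.sqrt (‖x' - y‖ ^ 2 + (η n) ^ 2) + v i xb := by
    intro n
    set η0 := η n with hη0_def
    have hη0pos : 0 < η0 := hηpos n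
    have hKη0 : K * η0 ≤ 1 := by
      rw [hη0_def, hη_def]
      have h1 : K * ((1 / K) * (1 / ((n:ℝ) + 1))) = 1 / ((n:ℝ) + 1) := by
        field_simp
      rw [h1]
      rw [div_le_one (by positivity)]
      linarith [Nat.cast_nonneg (α := ℝ) n]
    set φ : Euc N → ℝ := fun z => K * Real.sqrt (‖z - y‖ ^ 2 + η0 ^ 2) with hφ_def
    have hφc : ContDiff ℝ 1 φ := sqTest_contDiff K η0 hη0pos.ne' y
    have hφge : ∀ z, K * ‖z - y‖ ≤ φ z := by
      intro z
      apply mul_le_mul_of_nonneg_left _ hKpos.le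
      rw [show ‖z - y‖ = Real.sqrt (‖z - y‖ ^ 2) from (Real.sqrt_sq (norm_nonneg _)).symm]
      apply Real.sqrt_le_sqrt
      nlinarith [sq_nonneg η0, sq_nonneg ‖z - y‖, Real.sq_sqrt (sq_nonneg ‖z - y‖)]
    have hφpos : ∀ z, 0 ≤ φ z := fun z =>
      mul_nonneg hKpos.le (Real.sqrt_nonneg _)
    have hφy : φ y = K * η0 := by
      simp only [hφ_def, sub_self, norm_zero]
      rw [show (0:ℝ) ^ 2 + η0 ^ 2 = η0 ^ 2 by ring, Real.sqrt_sq hη0pos.le]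
    have hfc : Continuous (fun z => v i z - φ z) := (hvc i).sub hφc.continuous
    obtain ⟨xb, hxbmem, hmax⟩ := (isCompact_closedBall y ρ).exists_isMaxOn
      ⟨y, Metric.mem_closedBall_self hρpos.le⟩ hfc.continuousOn
    rw [isMaxOn_iff] at hmax
    have hbase := hmax y (Metric.mem_closedBall_self hρpos.le)
    have hbd : ‖xb - y‖ < ρ := by
      by_contra hge
      push_neg at hge
      have h1 : K * ‖xb - y‖ ≤ φ xb := hφge xb
      have h2 : ρ ≤ K * ‖xb - y‖ := by
        calc ρ = 1 * ρ := (one_mul ρ).symm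
          _ ≤ K * ‖xb - y‖ := mul_le_mul hK1 hge hρpos.le hKpos.le
      have h3 := abs_le.1 (hMv xb)
      have h4 := abs_le.1 (hMv y)
      rw [hφy] at hbase
      linarith
    have hloc : IsLocalMax (fun z => v i z - φ z) xb := by
      have hball : Metric.ball y ρ ∈ nhds xb :=
        Metric.isOpen_ball.mem_nhds (by simpa [Metric.mem_ball, dist_eq_norm] using hbd)
      exact Filter.eventually_of_mem hball
        (fun z hz => hmax z (Metric.ball_subset_closedBall hz))
    have hvisc := hsub i xb φ hφc hloc
    simp only at hvisc
    have hHle : H i xb (gradient φ xb) ≤ C2 := by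
      have := hBv i xb
      linarith
    set S := ‖xb - y‖ ^ 2 + η0 ^ 2 with hS_def
    have hSpos : 0 < S := by positivity
    have hsS : 0 < Real.sqrt S := Real.sqrt_pos.2 hSpos
    have hgrad : gradient φ xb = (K / Real.sqrt S) • (xb - y) :=
      (sqTest_hasGradientAt K η0 hη0pos.ne' y xb).gradient
    have hnR : ‖gradient φ xb‖ < R := by
      by_contra hge
      push_neg at hge
      exact absurd hHle (not_le.2 (hcoerc i xb _ hge))
    have hnorm : ‖gradient φ xb‖ = (K / Real.sqrt S) * ‖xb - y‖ := by
      rw [hgrad, norm_smul, Real.norm_eq_abs, abs_of_pos (div_pos hKpos hsS)]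
    rw [hnorm] at hnR
    have hKd : K * ‖xb - y‖ < R * Real.sqrt S := by
      have h1 := mul_lt_mul_of_pos_right hnR hsS
      calc K * ‖xb - y‖ = (K / Real.sqrt S) * ‖xb - y‖ * Real.sqrt S := by
            field_simp
        _ < R * Real.sqrt S := h1
    have hsq : K ^ 2 * ‖xb - y‖ ^ 2 < R ^ 2 * S := by
      have h0 : 0 ≤ K * ‖xb - y‖ := mul_nonneg hKpos.le (norm_nonneg _)
      have h1 := mul_self_lt_mul_self h0 hKd
      have h2 : Real.sqrt S * Real.sqrt S = S := Real.mul_self_sqrt hSpos.le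
      nlinarith
    have hdle : ‖xb - y‖ ≤ R * η0 := by
      have hKR : K ^ 2 = R ^ 2 + 2 * R + 1 := by rw [hK]; ring
      by_contra hcon
      push_neg at hcon
      have hR2 : 0 < R * η0 := mul_pos hR0 hη0pos
      nlinarith [sq_nonneg ‖xb - y‖, norm_nonneg (xb - y)]
    refine ⟨xb, hdle, fun x' => ?_⟩
    by_cases hx' : x' ∈ Metric.closedBall y ρ
    · have h1 := hmax x' hx'
      have h2 := hφpos xb
      simp only [hφ_def] at h1 h2
      linarith
    · have h1 : ρ < ‖x' - y‖ := by
        rw [Metric.mem_closedBall, dist_eq_norm, not_le] at hx'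
        exact hx'
      have h2 := abs_le.1 (hMv x')
      have h3 := abs_le.1 (hMv xb)
      have h4 := hφge x'
      have h5 : ρ ≤ K * ‖x' - y‖ := by
        calc ρ = 1 * ρ := (one_mul ρ).symm
          _ ≤ K * ‖x' - y‖ := mul_le_mul hK1 h1.le hρpos.le hKpos.le
      simp only [hφ_def] at h4
      linarith
  choose xb hxb1 hxb2 using key
  have hη0 : Tendsto η atTop (nhds 0) := by
    have h0 := tendsto_inv_nat.const_mul (1 / K)
    simpa [hη_def] using h0
  have hxbt : Tendsto xb atTop (nhds y) := by
    rw [tendsto_iff_dist_tendsto_zero]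
    have h1 : Tendsto (fun n => R * η n) atTop (nhds 0) := by
      have h2 := hη0.const_mul R
      simpa [hη_def] using h2
    exact squeeze_zero (fun n => dist_nonneg)
      (fun n => by rw [dist_eq_norm]; exact hxb1 n) h1
  have hlim : Tendsto (fun n => K * Real.sqrt (‖x - y‖ ^ 2 + (η n) ^ 2) + v i (xb n))
      atTop (nhds (K * ‖x - y‖ + v i y)) := by
    have h1 : Tendsto (fun t : ℝ => K * Real.sqrt (‖x - y‖ ^ 2 + t ^ 2)) (nhds 0)
        (nhds (K * ‖x - y‖)) := by
      have hc : Continuous (fun t : ℝ => K * Real.sqrt (‖x - y‖ ^ 2 + t ^ 2)) :=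
        continuous_const.mul (Real.continuous_sqrt.comp
          (continuous_const.add (continuous_pow 2)))
      have := hc.tendsto 0
      simpa [Real.sqrt_sq (norm_nonneg (x - y))] using this
    exact (h1.comp hη0).add (((hvc i).tendsto y).comp hxbt)
  have := ge_of_tendsto hlim (Filter.Eventually.of_forall (fun n => hxb2 n x))
  linarith
end S9
namespace S9
open Filter

variable {N m : ℕ}

/-- Critical subsolutions are stable under adding a constant to all components. -/
lemma crit_shift {H : Fin m → Euc N → Euc N → ℝ} {B : Euc N → Fin m → Fin m → ℝ}
    (hB : IsCouplingField B) {v : Fin m → Euc N → ℝ} (hv : v ∈ Crit H B) (c : ℝ) :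
    (fun i x => v i x + c) ∈ Crit H B := by
  obtain ⟨⟨hvc, hvp⟩, hsub⟩ := hv
  refine ⟨⟨fun i => (hvc i).add continuous_const, fun i x k => ?_⟩, ?_⟩
  · show v i (x + intVec k) + c = v i x + c
    rw [hvp i x k]
  · intro i x φ hφ hmax
    set ψ : Euc N → ℝ := fun z => φ z - c with hψ_def
    have hψ : ContDiff ℝ 1 ψ := hφ.sub contDiff_const
    have hmax' : IsLocalMax (fun z => v i z - ψ z) x := by
      have heq : (fun z => v i z - ψ z) = (fun z => (v i z + c) - φ z) := by
        funext z
        simp [hψ_def]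
        ring
      rw [heq]
      exact hmax
    have hgradeq : gradient ψ x = gradient φ x := by
      have h1 : HasGradientAt φ (gradient φ x) x :=
        (hφ.differentiable one_ne_zero).differentiableAt.hasGradientAt
      have h2 : HasGradientAt ψ (gradient φ x) x := by
        rw [hasGradientAt_iff_hasFDerivAt] at h1 ⊢
        exact h1.sub_const c
      exact h2.gradient
    have h := hsub i x ψ hψ hmax'
    rw [hgradeq] at h
    have hcoup : ∑ j, B x i j * (v j x + c) = ∑ j, B x i j * v j x := by
      have hdeg : ∑ j, B x i j = 0 := (hB.2.2 x).2.1 i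
      calc ∑ j, B x i j * (v j x + c)
          = (∑ j, B x i j * v j x) + (∑ j, B x i j) * c := by
            rw [Finset.sum_mul, ← Finset.sum_add_distrib]
            congr 1; ext j; ring
        _ = ∑ j, B x i j * v j x := by rw [hdeg]; ring
    simpa [hcoup] using h

/-- The Mañé function `Φ_{·,j}(y,·)` is a viscosity subsolution
(stability of subsolutions under suprema). -/
lemma mane_subsol {H : Fin m → Euc N → Euc N → ℝ} {B : Euc N → Fin m → Fin m → ℝ}
    (hH : ∀ i, IsConvexHamiltonian (H i)) (hB : IsCouplingField B)
    (hCne : (Crit H B).Nonempty)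
    (hbdd : ∀ (i j : Fin m) (y x : Euc N),
      BddAbove ((fun v : Fin m → Euc N → ℝ => v i x - v j y) '' Crit H B))
    (hwcont : ∀ (l j : Fin m) (y : Euc N), Continuous (fun x => Mane H B l j y x))
    (j : Fin m) (y : Euc N) :
    IsSubSol H B (fun _ => 0) (fun l x => Mane H B l j y x) := by
  have himg : ∀ (i : Fin m) (x : Euc N),
      ((fun v : Fin m → Euc N → ℝ => v i x - v j y) '' Crit H B).Nonempty :=
    fun i x => hCne.image _
  have hle : ∀ v ∈ Crit H B, ∀ (l : Fin m) (x : Euc N),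
      v l x - v j y ≤ Mane H B l j y x :=
    fun v hv l x => le_csSup (hbdd l j y x) ⟨v, hv, rfl⟩
  have happrox : ∀ (l : Fin m) (x0 : Euc N) (n : ℕ), ∃ u ∈ Crit H B,
      (∀ (k : Fin m) (x : Euc N), u k x ≤ Mane H B k j y x) ∧
      Mane H B l j y x0 - 1 / (n + 1) < u l x0 := by
    intro l x0 n
    have hlt : Mane H B l j y x0 - 1 / (n + 1) < Mane H B l j y x0 :=
      sub_lt_self _ (by positivity)
    obtain ⟨rr, hrr, hrlt⟩ := exists_lt_of_lt_csSup (himg l x0) hlt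
    obtain ⟨v, hv, hveq⟩ := hrr
    refine ⟨fun k x => v k x + (-(v j y)), crit_shift hB hv _, fun k x => ?_, ?_⟩
    · have := hle v hv k x
      show v k x + (-(v j y)) ≤ Mane H B k j y x
      linarith
    · show Mane H B l j y x0 - 1 / (n + 1) < v l x0 + (-(v j y))
      rw [← hveq] at hrlt
      linarith [hrlt]
  intro l x0 φ hφ hmax
  -- extract a closed ball on which `x0` is a max of `Mane - φ`
  obtain ⟨r0, hr0pos, hr0⟩ := Metric.eventually_nhds_iff.1 hmax
  set r := r0 / 2 with hr_def
  have hrpos : 0 < r := by positivity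
  have hball : ∀ z ∈ Metric.closedBall x0 r,
      Mane H B l j y z - φ z ≤ Mane H B l j y x0 - φ x0 := by
    intro z hz
    have : dist z x0 < r0 := by
      rw [Metric.mem_closedBall] at hz
      linarith
    exact hr0 this
  set φt : Euc N → ℝ := fun z => φ z + ‖z - x0‖ ^ 2 with hφt_def
  have hφtc : ContDiff ℝ 1 φt := hφ.add (contDiff_normSq x0)
  have hφtx0 : φt x0 = φ x0 := by simp [hφt_def]
  have key : ∀ n : ℕ, ∃ (xn : Euc N) (t : ℝ),
      ‖xn - x0‖ ≤ Real.sqrt (1 / (n + 1)) ∧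
      Mane H B l j y x0 - 1 / (n + 1) + (φt xn - φ x0) ≤ t ∧
      t ≤ Mane H B l j y xn ∧
      (‖xn - x0‖ < r →
        H l xn (gradient φt xn) + B xn l l * t +
          ∑ k ∈ Finset.univ.erase l, B xn l k * Mane H B k j y xn ≤ 0) := by
    intro n
    obtain ⟨un, hun, hunle, hunlt⟩ := happrox l x0 n
    have hunc : Continuous (un l) := hun.1.1 l
    have hgc : Continuous (fun z => un l z - φt z) := hunc.sub hφtc.continuous
    obtain ⟨xn, hxnmem, hmaxn⟩ := (isCompact_closedBall x0 r).exists_isMaxOn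
      ⟨x0, Metric.mem_closedBall_self hrpos.le⟩ hgc.continuousOn
    rw [isMaxOn_iff] at hmaxn
    have hbase := hmaxn x0 (Metric.mem_closedBall_self hrpos.le)
    -- (b)
    have hb : Mane H B l j y x0 - 1 / (n + 1) + (φt xn - φ x0) ≤ un l xn := by
      have h1 : un l x0 - φt x0 ≤ un l xn - φt xn := hbase
      rw [hφtx0] at h1
      calc Mane H B l j y x0 - 1 / (n + 1) + (φt xn - φ x0)
          ≤ un l x0 + (φt xn - φ x0) := by linarith [hunlt]
        _ ≤ un l xn := by linarith [h1]
    -- (c)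
    have hc : un l xn ≤ Mane H B l j y xn := hunle l xn
    -- (a)
    have hmem2 := hball xn hxnmem
    have ha2 : ‖xn - x0‖ ^ 2 ≤ 1 / (n + 1) := by
      have h2 : un l xn - φt xn ≤ Mane H B l j y xn - φ xn - ‖xn - x0‖ ^ 2 := by
        simp only [hφt_def]
        linarith
      linarith
    have ha : ‖xn - x0‖ ≤ Real.sqrt (1 / (n + 1)) := by
      have h6 := Real.sqrt_le_sqrt ha2
      rwa [Real.sqrt_sq (norm_nonneg _)] at h6
    refine ⟨xn, un l xn, ha, hb, hc, fun hin => ?_⟩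
    have hloc : IsLocalMax (fun z => un l z - φt z) xn := by
      have hball2 : Metric.ball x0 r ∈ nhds xn :=
        Metric.isOpen_ball.mem_nhds (by simpa [Metric.mem_ball, dist_eq_norm] using hin)
      exact Filter.eventually_of_mem hball2
        (fun z hz => hmaxn z (Metric.ball_subset_closedBall hz))
    have hvisc := hun.2 l xn φt hφtc hloc
    simp only at hvisc
    have hsplit : ∑ k, B xn l k * un k xn =
        B xn l l * un l xn + ∑ k ∈ Finset.univ.erase l, B xn l k * un k xn :=
      (Finset.add_sum_erase Finset.univ _ (Finset.mem_univ l)).symm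
    have hterm : ∀ k ∈ Finset.univ.erase l,
        B xn l k * Mane H B k j y xn ≤ B xn l k * un k xn := by
      intro k hk
      have hkl : k ≠ l := Finset.ne_of_mem_erase hk
      have hBle : B xn l k ≤ 0 := (hB.2.2 xn).1.1 l k hkl
      exact mul_le_mul_of_nonpos_left (hunle k xn) hBle
    have hsum : ∑ k ∈ Finset.univ.erase l, B xn l k * Mane H B k j y xn ≤
        ∑ k ∈ Finset.univ.erase l, B xn l k * un k xn :=
      Finset.sum_le_sum hterm
    rw [hsplit] at hvisc
    linarith
  choose xn tn ha hb hc hd using key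
  -- limits
  have hsqrt0 : Tendsto (fun n : ℕ => Real.sqrt (1 / (n + 1))) atTop (nhds 0) := by
    have h2 := (Real.continuous_sqrt.tendsto 0).comp tendsto_inv_nat
    rw [Real.sqrt_zero] at h2
    exact h2
  have hxnt : Tendsto xn atTop (nhds x0) := by
    rw [tendsto_iff_dist_tendsto_zero]
    exact squeeze_zero (fun n => dist_nonneg)
      (fun n => by rw [dist_eq_norm]; exact ha n) hsqrt0
  have hnorm0 : Tendsto (fun n => ‖xn n - x0‖) atTop (nhds 0) :=
    squeeze_zero (fun n => norm_nonneg _) ha hsqrt0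
  have hev : ∀ᶠ n in atTop, ‖xn n - x0‖ < r := hnorm0.eventually (gt_mem_nhds hrpos)
  -- tendsto of tn
  have hφtcont : Continuous φt := hφtc.continuous
  have htn : Tendsto tn atTop (nhds (Mane H B l j y x0)) := by
    have hlow : Tendsto (fun n => Mane H B l j y x0 - 1 / (n + 1) + (φt (xn n) - φ x0))
        atTop (nhds (Mane H B l j y x0)) := by
      have h1 : Tendsto (fun n : ℕ => Mane H B l j y x0 - 1 / (n + 1)) atTop
          (nhds (Mane H B l j y x0)) := by
        have h2 := tendsto_const_nhds (x := Mane H B l j y x0) (f := atTop (α := ℕ)) |>.sub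
          tendsto_inv_nat
        simpa using h2
      have h3 : Tendsto (fun n => φt (xn n) - φ x0) atTop (nhds 0) := by
        have h4 := (hφtcont.tendsto x0).comp hxnt
        rw [hφtx0] at h4
        have h5 := h4.sub (tendsto_const_nhds (x := φ x0) (f := atTop (α := ℕ)))
        simpa using h5
      have h6 := h1.add h3
      simpa using h6
    have hup : Tendsto (fun n => Mane H B l j y (xn n)) atTop
        (nhds (Mane H B l j y x0)) := ((hwcont l j y).tendsto x0).comp hxnt
    exact tendsto_of_tendsto_of_tendsto_of_le_of_le hlow hup hb hc
  -- tendsto of the gradient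
  have hgradt : Tendsto (fun n => gradient φt (xn n)) atTop (nhds (gradient φ x0)) := by
    have heq : ∀ z, gradient φt z = gradient φ z + (2:ℝ) • (z - x0) := by
      intro z
      simp only [hφt_def]
      exact gradient_add_normSq hφ x0 z
    have hgc2 : Continuous (fun z => gradient φ z + (2:ℝ) • (z - x0)) :=
      (gradient_continuous hφ).add (((continuous_id.sub continuous_const)).const_smul (2:ℝ))
    have h1 := (hgc2.tendsto x0).comp hxnt
    have h2 : gradient φ x0 + (2:ℝ) • (x0 - x0) = gradient φ x0 := by simp
    rw [h2] at h1
    convert h1 using 1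
    funext n
    exact heq (xn n)
  -- tendsto of the whole expression
  have hq : Tendsto (fun n => H l (xn n) (gradient φt (xn n)) + B (xn n) l l * tn n +
      ∑ k ∈ Finset.univ.erase l, B (xn n) l k * Mane H B k j y (xn n)) atTop
      (nhds (H l x0 (gradient φ x0) + B x0 l l * Mane H B l j y x0 +
        ∑ k ∈ Finset.univ.erase l, B x0 l k * Mane H B k j y x0)) := by
    have hHt : Tendsto (fun n => H l (xn n) (gradient φt (xn n))) atTop
        (nhds (H l x0 (gradient φ x0))) := by
      have hHc := (hH l).1
      exact (hHc.tendsto (x0, gradient φ x0)).comp (hxnt.prodMk_nhds hgradt)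
    have hBt : Tendsto (fun n => B (xn n) l l * tn n) atTop
        (nhds (B x0 l l * Mane H B l j y x0)) :=
      (((hB.1 l l).tendsto x0).comp hxnt).mul htn
    have hSt : Tendsto (fun n => ∑ k ∈ Finset.univ.erase l, B (xn n) l k *
        Mane H B k j y (xn n)) atTop
        (nhds (∑ k ∈ Finset.univ.erase l, B x0 l k * Mane H B k j y x0)) := by
      apply tendsto_finset_sum
      intro k _
      exact (((hB.1 l k).tendsto x0).comp hxnt).mul (((hwcont k j y).tendsto x0).comp hxnt)
    exact (hHt.add hBt).add hSt
  have hfin := le_of_tendsto hq (hev.mono fun n hn => hd n hn)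
  show H l x0 (gradient φ x0) + ∑ k, B x0 l k * Mane H B k j y x0 ≤ 0
  have hsplit0 : ∑ k, B x0 l k * Mane H B k j y x0 =
      B x0 l l * Mane H B l j y x0 +
        ∑ k ∈ Finset.univ.erase l, B x0 l k * Mane H B k j y x0 :=
    (Finset.add_sum_erase Finset.univ _ (Finset.mem_univ l)).symm
  rw [hsplit0]
  linarith

end S9
/-- basic properties of the Mañé matrix. -/
theorem stmt9 {N m : ℕ} (hN : 0 < N) (hm : 0 < m)
    (H : Fin m → Euc N → Euc N → ℝ) (hH : ∀ i, IsConvexHamiltonian (H i))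
    (B : Euc N → Fin m → Fin m → ℝ) (hB : IsCouplingField B)
    (hcrit : IsLeast {a : ℝ | HasSubSol H B a} 0) :
    (∀ (i j : Fin m) (y x : Euc N),
        ((fun v : Fin m → Euc N → ℝ => v i x - v j y) '' Crit H B).Nonempty ∧
        BddAbove ((fun v : Fin m → Euc N → ℝ => v i x - v j y) '' Crit H B)) ∧
    (∃ K : NNReal, ∀ i j : Fin m,
        LipschitzWith K (fun p : Euc N × Euc N => Mane H B i j p.1 p.2)) ∧
    (∀ (j : Fin m) (y : Euc N), (fun i x => Mane H B i j y x) ∈ Crit H B) ∧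
    (∀ (j : Fin m) (y : Euc N), Mane H B j j y y = 0 ∧
        ∀ v ∈ Crit H B, ∀ (i : Fin m) (x : Euc N), v i x - v j y ≤ Mane H B i j y x) ∧
    (∀ (i j k : Fin m) (x y z : Euc N),
        Mane H B i k x z ≤ Mane H B j k x y + Mane H B i j y z) := by
  classical
  -- constants
  obtain ⟨CH, hCH0, hCH⟩ := S9.exists_CH hH
  obtain ⟨Cb, hCb0, hCb⟩ := S9.exists_Cb hB
  obtain ⟨ε, hε, hEps⟩ := S9.exists_eps hB
  -- `Crit` is nonempty
  obtain ⟨v0, hv01, hv02⟩ := hcrit.1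
  have hCne : (Crit H B).Nonempty := ⟨v0, hv01, hv02⟩
  -- pointwise coupling bound
  have hcoup : ∀ v ∈ Crit H B, ∀ (i : Fin m) (x : Euc N), ∑ j, B x i j * v j x ≤ CH :=
    fun v hv i x => S9.coupling_bound hB.1 hCH hv i x
  -- pointwise spread
  set C1 : ℝ := S9.Ebnd (m * CH / ε) (m ^ 2 * Cb / ε) m with hC1def
  have hC1 : 0 ≤ C1 := S9.Ebnd_nonneg (by positivity) (by positivity) m
  have hspread : ∀ v ∈ Crit H B, ∀ (x : Euc N) (i j : Fin m), v i x - v j x ≤ C1 :=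
    fun v hv x i j => S9.spread hm hB hCH0 hCb0 hε hCb hEps x (fun k => v k x)
      (fun i => hcoup v hv i x) i j
  -- lower bound on the coupling term
  set C2 : ℝ := m * (Cb * C1) with hC2def
  have hBv : ∀ v ∈ Crit H B, ∀ (i : Fin m) (x : Euc N), -C2 ≤ ∑ j, B x i j * v j x := by
    intro v hv i x
    have hdeg : ∑ j, B x i j = 0 := (hB.2.2 x).2.1 i
    have heq : ∑ j, B x i j * v j x = ∑ j, B x i j * (v j x - v i x) := by
      rw [eq_comm]
      calc ∑ j, B x i j * (v j x - v i x)
          = (∑ j, B x i j * v j x) - (∑ j, B x i j) * v i x := by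
            rw [Finset.sum_mul, ← Finset.sum_sub_distrib]
            congr 1; ext j; ring
        _ = ∑ j, B x i j * v j x := by rw [hdeg]; ring
    rw [heq]
    have hterm : ∀ j : Fin m, -(Cb * C1) ≤ B x i j * (v j x - v i x) := by
      intro j
      have h1 : |B x i j * (v j x - v i x)| ≤ Cb * C1 := by
        rw [abs_mul]
        apply mul_le_mul (hCb x i j) _ (abs_nonneg _) hCb0
        rw [abs_le]
        exact ⟨by linarith [hspread v hv x i j], by linarith [hspread v hv x j i]⟩
      linarith [abs_le.1 h1]
    calc -C2 = ∑ _j : Fin m, -(Cb * C1) := by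
          rw [Finset.sum_const, Finset.card_univ, Fintype.card_fin, nsmul_eq_mul, hC2def]
          ring
      _ ≤ ∑ j, B x i j * (v j x - v i x) := Finset.sum_le_sum fun j _ => hterm j
  -- coercivity radius and the equi-Lipschitz constant
  obtain ⟨R, hR0, hcoerc⟩ := S9.exists_coercR hH C2
  set K : ℝ := R + 1 with hKdef
  have hK0 : 0 < K := by rw [hKdef]; linarith
  have hlip : ∀ v ∈ Crit H B, ∀ (i : Fin m) (x y : Euc N), v i x - v i y ≤ K * ‖x - y‖ :=
    fun v hv i x y => S9.crit_lipschitz hR0 hcoerc hv (hBv v hv) i x y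
  -- global bound
  set C3 : ℝ := C1 + K * Real.sqrt N with hC3def
  have hub : ∀ v ∈ Crit H B, ∀ (i j : Fin m) (x y : Euc N), v i x - v j y ≤ C3 := by
    intro v hv i j x y
    obtain ⟨k, hk⟩ := S9.exists_rep (x - y)
    have hper : v j y = v j (y + intVec k) := (hv.1.2 j y k).symm
    have h1 : v i x - v j x ≤ C1 := hspread v hv x i j
    have h2 : v j x - v j (y + intVec k) ≤ K * ‖x - (y + intVec k)‖ := hlip v hv j x _
    have h3 : ‖x - (y + intVec k)‖ ≤ Real.sqrt N := by
      rw [show x - (y + intVec k) = (x - y) - intVec k by abel]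
      exact hk
    have h4 : K * ‖x - (y + intVec k)‖ ≤ K * Real.sqrt N :=
      mul_le_mul_of_nonneg_left h3 hK0.le
    rw [hC3def]
    calc v i x - v j y = (v i x - v j x) + (v j x - v j (y + intVec k)) := by
          rw [hper]; ring
      _ ≤ C1 + K * Real.sqrt N := by linarith
  -- part (i)
  have hne : ∀ (i j : Fin m) (y x : Euc N),
      ((fun v : Fin m → Euc N → ℝ => v i x - v j y) '' Crit H B).Nonempty :=
    fun i j y x => hCne.image _
  have hbddA : ∀ (i j : Fin m) (y x : Euc N),
      BddAbove ((fun v : Fin m → Euc N → ℝ => v i x - v j y) '' Crit H B) := by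
    intro i j y x
    refine ⟨C3, ?_⟩
    rintro rr ⟨v, hv, rfl⟩
    exact hub v hv i j x y
  -- basic Mañé bounds
  have hmane_le : ∀ (i j : Fin m) (y x : Euc N), ∀ v ∈ Crit H B,
      v i x - v j y ≤ Mane H B i j y x :=
    fun i j y x v hv => le_csSup (hbddA i j y x) ⟨v, hv, rfl⟩
  -- joint Lipschitz estimate for Mañé
  have hmane_lip : ∀ (i j : Fin m) (p q : Euc N × Euc N),
      Mane H B i j p.1 p.2 - Mane H B i j q.1 q.2 ≤ 2 * K * dist p q := by
    intro i j p q
    rw [sub_le_iff_le_add]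
    apply csSup_le (hne i j p.1 p.2)
    rintro rr ⟨v, hv, rfl⟩
    show v i p.2 - v j p.1 ≤ 2 * K * dist p q + Mane H B i j q.1 q.2
    have h1 : v i p.2 - v i q.2 ≤ K * ‖p.2 - q.2‖ := hlip v hv i p.2 q.2
    have h2 : v j q.1 - v j p.1 ≤ K * ‖q.1 - p.1‖ := hlip v hv j q.1 p.1
    have h3 : ‖p.2 - q.2‖ = dist p.2 q.2 := (dist_eq_norm _ _).symm
    have h4 : ‖q.1 - p.1‖ = dist q.1 p.1 := (dist_eq_norm _ _).symm
    have h5 : dist p.2 q.2 ≤ dist p q := by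
      rw [Prod.dist_eq]; exact le_max_right _ _
    have h6 : dist q.1 p.1 ≤ dist p q := by
      rw [dist_comm, Prod.dist_eq]; exact le_max_left _ _
    have h7 := hmane_le i j q.1 q.2 v hv
    rw [h3] at h1
    rw [h4] at h2
    have h8 : K * dist p.2 q.2 ≤ K * dist p q := mul_le_mul_of_nonneg_left h5 hK0.le
    have h9 : K * dist q.1 p.1 ≤ K * dist p q := mul_le_mul_of_nonneg_left h6 hK0.le
    linarith
  -- part (ii) preliminaries: continuity in `x`
  have hK2 : ∀ i j : Fin m, LipschitzWith (Real.toNNReal (2 * K))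
      (fun p : Euc N × Euc N => Mane H B i j p.1 p.2) := by
    intro i j
    apply LipschitzWith.of_dist_le_mul
    intro p q
    rw [Real.dist_eq, Real.coe_toNNReal _ (by positivity : (0:ℝ) ≤ 2 * K), abs_sub_le_iff]
    constructor
    · exact hmane_lip i j p q
    · have := hmane_lip i j q p
      rwa [dist_comm] at this
  have hwcont : ∀ (l j : Fin m) (y : Euc N), Continuous fun x => Mane H B l j y x := by
    intro l j y
    have h1 := (hK2 l j).continuous
    exact h1.comp (continuous_const.prodMk continuous_id)
  have hwper : ∀ (l j : Fin m) (y : Euc N), ZPeriodic fun x => Mane H B l j y x := by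
    intro l j y x k
    show Mane H B l j y (x + intVec k) = Mane H B l j y x
    unfold Mane
    congr 1
    ext rr
    constructor
    · rintro ⟨v, hv, rfl⟩
      refine ⟨v, hv, ?_⟩
      show v l x - v j y = v l (x + intVec k) - v j y
      rw [hv.1.2 l x k]
    · rintro ⟨v, hv, rfl⟩
      refine ⟨v, hv, ?_⟩
      show v l (x + intVec k) - v j y = v l x - v j y
      rw [hv.1.2 l x k]
  have hmem : ∀ (j : Fin m) (y : Euc N), (fun i x => Mane H B i j y x) ∈ Crit H B :=
    fun j y => ⟨⟨fun i => hwcont i j y, fun i => hwper i j y⟩,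
      S9.mane_subsol hH hB hCne hbddA hwcont j y⟩
  refine ⟨fun i j y x => ⟨hne i j y x, hbddA i j y x⟩,
    ⟨Real.toNNReal (2 * K), hK2⟩, hmem, ?_, ?_⟩
  · -- part (iii)
    intro j y
    constructor
    · have himg : (fun v : Fin m → Euc N → ℝ => v j y - v j y) '' Crit H B = {0} := by
        ext rr
        constructor
        · rintro ⟨v, hv, rfl⟩
          simp
        · rintro h
          simp only [Set.mem_singleton_iff] at h
          exact ⟨v0, ⟨hv01, hv02⟩, by rw [h]; ring⟩
      show sSup ((fun v : Fin m → Euc N → ℝ => v j y - v j y) '' Crit H B) = 0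
      rw [himg]
      exact csSup_singleton 0
    · exact fun v hv i x => hmane_le i j y x v hv
  · -- part (iv): triangle inequality
    intro i j k x y z
    apply csSup_le (hne i k x z)
    rintro rr ⟨v, hv, rfl⟩
    show v i z - v k x ≤ Mane H B j k x y + Mane H B i j y z
    have h1 := hmane_le j k x y v hv
    have h2 := hmane_le i j y z v hv
    linarith

end
end

section
/- Assume the critical value is 0. Let y ∈ A and i ∈ {1,…,m}. Then every critical subsolution v ∈ H(0) satisfies v(y) = Φ_{·,i}(y,y) + v_i(y)𝟙, i.e. v_k(y) = Φ_{k,i}(y,y) + v_i(y) for every k ∈ {1,…,m}. In particular, for any two critical subsolutions v, w ∈ H(0), the difference v(y) − w(y) belongs to ℝ𝟙. -/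
open Filter MeasureTheory

noncomputable section

open Topology

section helpers
-- reduction to a compact fundamental domain
lemma exists_intVec_norm_le {N : ℕ} (x : Euc N) :
    ∃ k : Fin N → ℤ, ‖x - intVec k‖ ≤ N := by
  refine ⟨fun i => ⌊x i⌋, ?_⟩
  have h1 : ‖x - intVec (fun i => ⌊x i⌋)‖ ≤ Real.sqrt N := by
    rw [EuclideanSpace.norm_eq]
    apply Real.sqrt_le_sqrt
    have : ∀ i : Fin N, ‖(x - intVec (fun i => ⌊x i⌋)) i‖ ^ 2 ≤ 1 := by
      intro i
      have : (x - intVec (fun i => ⌊x i⌋)) i = Int.fract (x i) := by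
        rw [PiLp.sub_apply, ← Int.self_sub_floor]; rfl
      rw [this]
      have h0 := Int.fract_nonneg (x i)
      have h1 := (Int.fract_lt_one (x i)).le
      rw [Real.norm_eq_abs, abs_of_nonneg h0]
      nlinarith
    calc ∑ i, ‖(x - intVec (fun i => ⌊x i⌋)) i‖ ^ 2 ≤ ∑ _i : Fin N, (1:ℝ) :=
          Finset.sum_le_sum fun i _ => this i
      _ = N := by simp
  refine h1.trans ?_
  have h2 : ((N:ℝ)) ≤ (N:ℝ)^2 := by
    rcases Nat.eq_zero_or_pos N with h | h
    · simp [h]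
    · have : (1:ℝ) ≤ N := by exact_mod_cast h
      nlinarith
  calc Real.sqrt N ≤ Real.sqrt ((N:ℝ)^2) := Real.sqrt_le_sqrt h2
    _ = N := Real.sqrt_sq (Nat.cast_nonneg N)

lemma periodic_bound {N : ℕ} {f : Euc N → ℝ} (hc : Continuous f) (hp : ZPeriodic f) :
    ∃ M : ℝ, 0 ≤ M ∧ ∀ x, |f x| ≤ M := by
  obtain ⟨C, hC⟩ := (isCompact_closedBall (0 : Euc N) N).exists_bound_of_continuousOn
    hc.continuousOn
  refine ⟨max C 0, le_max_right _ _, fun x => ?_⟩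
  obtain ⟨k, hk⟩ := exists_intVec_norm_le x
  have : f x = f (x - intVec k) := by
    conv_lhs => rw [show x = (x - intVec k) + intVec k by abel]
    exact hp _ k
  rw [this]
  have := hC (x - intVec k) (by simpa [Metric.mem_closedBall, dist_eq_norm] using hk)
  exact le_trans (by simpa using this) (le_max_left _ _)
local notation "⟪" x ", " y "⟫" => @inner ℝ _ _ x y

lemma contDiff_quad {N : ℕ} (c : ℝ) (a : Euc N) :
    ContDiff ℝ 1 (fun z : Euc N => c * ⟪z - a, z - a⟫) :=
  contDiff_const.mul ((contDiff_id.sub contDiff_const).inner ℝ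
    (contDiff_id.sub contDiff_const))

lemma hasFDerivAt_quad_aux {N : ℕ} (c : ℝ) (a : Euc N) (z : Euc N) :
    HasFDerivAt (fun z : Euc N => c * ⟪z - a, z - a⟫)
      ((InnerProductSpace.toDual ℝ (Euc N)) ((2*c) • (z - a))) z := by
  have hid : HasFDerivAt (fun z : Euc N => z - a) (ContinuousLinearMap.id ℝ (Euc N)) z :=
    (hasFDerivAt_id z).sub_const a
  have hin := (hid.inner ℝ hid).const_mul c
  refine hin.congr_fderiv ?_
  apply ContinuousLinearMap.ext
  intro h
  simp only [InnerProductSpace.toDual_apply_apply, ContinuousLinearMap.smul_apply,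
    ContinuousLinearMap.coe_comp', Function.comp_apply, ContinuousLinearMap.prod_apply,
    ContinuousLinearMap.coe_id', id_eq, fderivInnerCLM_apply, real_inner_smul_left,
    smul_eq_mul]
  rw [real_inner_comm (z - a) h]
  ring

lemma hasGradientAt_quad {N : ℕ} (c : ℝ) (a : Euc N) (z : Euc N) :
    HasGradientAt (fun z : Euc N => c * ⟪z - a, z - a⟫) ((2*c) • (z - a)) z := by
  rw [hasGradientAt_iff_hasFDerivAt]
  exact hasFDerivAt_quad_aux c a z

lemma gradient_quad {N : ℕ} (c : ℝ) (a : Euc N) (z : Euc N) :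
    gradient (fun z : Euc N => c * ⟪z - a, z - a⟫) z = (2*c) • (z - a) :=
  (hasGradientAt_quad c a z).gradient

lemma hasGradientAt_quad2 {N : ℕ} (c₁ c₂ : ℝ) (a b z : Euc N) :
    HasGradientAt (fun z : Euc N => c₁ * ⟪z - a, z - a⟫ + c₂ * ⟪z - b, z - b⟫)
      ((2*c₁) • (z - a) + (2*c₂) • (z - b)) z := by
  rw [hasGradientAt_iff_hasFDerivAt, map_add]
  exact (hasFDerivAt_quad_aux c₁ a z).add (hasFDerivAt_quad_aux c₂ b z)

lemma gradient_quad2 {N : ℕ} (c₁ c₂ : ℝ) (a b z : Euc N) :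
    gradient (fun z : Euc N => c₁ * ⟪z - a, z - a⟫ + c₂ * ⟪z - b, z - b⟫) z
      = (2*c₁) • (z - a) + (2*c₂) • (z - b) :=
  (hasGradientAt_quad2 c₁ c₂ a b z).gradient

lemma quad_inner_eq_norm {N : ℕ} (u : Euc N) : ⟪u, u⟫ = ‖u‖^2 :=
  real_inner_self_eq_norm_sq u

-- chaining small scale Lipschitz bounds to global ones
lemma chain_lipschitz {E : Type*} [NormedAddCommGroup E] [NormedSpace ℝ E]
    (f : E → ℝ) (c δ : ℝ) (hδ : 0 < δ)
    (h : ∀ a b : E, ‖b - a‖ ≤ δ → f b - f a ≤ c * ‖b - a‖) (a b : E) :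
    f b - f a ≤ c * ‖b - a‖ := by
  obtain ⟨T, hT⟩ : ∃ T : ℕ, ‖b - a‖ / δ ≤ T ∧ 1 ≤ T := by
    obtain ⟨T0, hT0⟩ := exists_nat_ge (‖b - a‖ / δ)
    exact ⟨max T0 1, le_trans hT0 (by exact_mod_cast le_max_left _ _), le_max_right _ _⟩
  have hTpos : (0:ℝ) < T := by exact_mod_cast hT.2
  set g : ℕ → E := fun t => a + ((t:ℝ)/T) • (b - a) with hg
  have hga : g 0 = a := by simp [hg]
  have hgb : g T = b := by
    simp only [hg]
    rw [div_self (ne_of_gt hTpos), one_smul]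
    abel
  have hstep : ∀ t : ℕ, g (t+1) - g t = ((1:ℝ)/T) • (b - a) := by
    intro t
    simp only [hg, Nat.cast_add, Nat.cast_one]
    rw [show a + (((t:ℝ)+1)/T) • (b - a) - (a + ((t:ℝ)/T) • (b - a))
        = ((((t:ℝ)+1)/T) - ((t:ℝ)/T)) • (b - a) by rw [sub_smul]; abel]
    congr 1
    field_simp
    ring
  have hstepnorm : ∀ t : ℕ, ‖g (t+1) - g t‖ = ‖b - a‖ / T := by
    intro t
    rw [hstep t, norm_smul]
    simp [abs_of_nonneg (le_of_lt (by positivity : (0:ℝ) < 1/T)), div_eq_mul_inv,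
      mul_comm]
  have hsmall : ‖b - a‖ / T ≤ δ := by
    rw [div_le_iff₀ hTpos]
    calc ‖b - a‖ ≤ T * δ := by
          have := hT.1
          rw [div_le_iff₀ hδ] at this
          linarith
      _ = δ * T := by ring
  have htel : f b - f a = ∑ t ∈ Finset.range T, (f (g (t+1)) - f (g t)) := by
    rw [Finset.sum_range_sub (fun t => f (g t)), hga, hgb]
  rw [htel]
  calc ∑ t ∈ Finset.range T, (f (g (t+1)) - f (g t))
      ≤ ∑ _t ∈ Finset.range T, c * (‖b - a‖ / T) := by
        apply Finset.sum_le_sum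
        intro t _
        have := h (g t) (g (t+1)) (by rw [hstepnorm t]; exact hsmall)
        rwa [hstepnorm t] at this
    _ = T * (c * (‖b - a‖ / T)) := by rw [Finset.sum_const, Finset.card_range]; ring
    _ = c * ‖b - a‖ := by field_simp

lemma lsc_comp_fst {X Y : Type*} [TopologicalSpace X] [TopologicalSpace Y] {h : X → ℝ}
    (hh : LowerSemicontinuous h) : LowerSemicontinuous (fun p : X × Y => h p.1) :=
  fun p c hc => (continuous_fst.tendsto p).eventually (hh p.1 c hc)

lemma exists_max_cont_sub_lsc {X : Type*} [MetricSpace X] {K : Set X}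
    (hK : IsCompact K) (hne : K.Nonempty) (g : X → ℝ) (hg : Continuous g)
    (h : X → ℝ) (hh : LowerSemicontinuous h) (Cb : ℝ) (hbd : ∀ p ∈ K, Cb ≤ h p) :
    ∃ p ∈ K, ∀ q ∈ K, g q - h q ≤ g p - h p := by
  set f : X → ℝ := fun p => g p - h p with hf
  obtain ⟨Cg, hCg⟩ := hK.exists_bound_of_continuousOn hg.continuousOn
  have hbddS : BddAbove (f '' K) := by
    refine ⟨Cg - Cb, ?_⟩
    rintro _ ⟨p, hp, rfl⟩
    have h1 : g p ≤ Cg := le_trans (le_abs_self _) (by simpa using hCg p hp)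
    have h2 := hbd p hp
    simp only [hf]
    linarith
  clear_value f
  set M := sSup (f '' K) with hM
  have hMne : (f '' K).Nonempty := hne.image f
  have happrox : ∀ n : ℕ, ∃ p ∈ K, M - 1/(n+1) < f p := by
    intro n
    have hlt : M - 1/(n+1) < M := by
      have : (0:ℝ) < 1/((n:ℝ)+1) := by positivity
      linarith
    obtain ⟨s, hs, hlt'⟩ := exists_lt_of_lt_csSup hMne hlt
    obtain ⟨p, hp, rfl⟩ := hs
    exact ⟨p, hp, hlt'⟩
  choose seq hseqK hseqlt using happrox
  clear_value M
  obtain ⟨pb, hpbK, σ, hσmono, hσtend⟩ := hK.tendsto_subseq hseqK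
  have hqM : ∀ q ∈ K, f q ≤ M := fun q hq => hM ▸ le_csSup hbddS ⟨q, hq, rfl⟩
  have hfinal : M ≤ f pb := by
    by_contra hcon
    push_neg at hcon
    set c := (f pb + M)/2 with hc
    clear_value c
    have hqM' := hqM pb hpbK
    have hc1 : f pb < c := by rw [hc]; linarith
    have hc2 : c < M := by rw [hc]; linarith
    set c'' := (c + M)/2 with hc''
    clear_value c''
    have hc3 : c'' < M := by rw [hc'']; linarith
    have hev1 : ∀ᶠ q' in 𝓝 pb, g pb - c < h q' := hh pb _ (by simp only [hf] at hc1; linarith)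
    have hev2 : ∀ᶠ q' in 𝓝 pb, g q' < g pb + (M - c)/2 :=
      (hg.tendsto pb).eventually_lt_const (by linarith)
    have hev : ∀ᶠ q' in 𝓝 pb, f q' < c'' := by
      filter_upwards [hev1, hev2] with q' h1 h2
      simp only [hf]
      rw [hc'']
      linarith
    have hevn : ∀ᶠ n in atTop, f (seq (σ n)) < c'' := hσtend.eventually hev
    obtain ⟨n₀, hn₀⟩ := exists_nat_one_div_lt (show (0:ℝ) < M - c'' by linarith)
    obtain ⟨n, hn1, hn2⟩ := (hevn.and (eventually_ge_atTop n₀)).exists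
    have hσn : (n₀ : ℝ) ≤ σ n := by
      exact_mod_cast le_trans hn2 (hσmono.le_apply)
    have hlow := hseqlt (σ n)
    have : 1/((σ n : ℝ)+1) ≤ 1/((n₀:ℝ)+1) := by
      apply one_div_le_one_div_of_le (by positivity)
      linarith
    linarith
  refine ⟨pb, hpbK, fun q hq => ?_⟩
  have h9 := le_trans (hqM q hq) hfinal
  rw [hf] at h9
  exact h9

lemma ham_lower_bound {N m : ℕ} (H : Fin m → Euc N → Euc N → ℝ)
    (hH : ∀ i, IsConvexHamiltonian (H i)) :
    ∃ A : ℝ, 0 ≤ A ∧ ∀ l x p, -A ≤ H l x p := by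
  have key : ∀ l, ∃ A : ℝ, 0 ≤ A ∧ ∀ x p, -A ≤ H l x p := by
    intro l
    obtain ⟨hcont, -, hper, α, β, hα, hβ, hbd⟩ := hH l
    obtain ⟨R₀, hR₀⟩ := eventually_atTop.mp (hα.eventually_ge_atTop 0)
    set R₁ := max R₀ 0 with hR₁
    have hR₁0 : (0:ℝ) ≤ R₁ := le_max_right _ _
    set K : Set (Euc N × Euc N) :=
      (Metric.closedBall (0 : Euc N) N) ×ˢ (Metric.closedBall (0 : Euc N) R₁) with hK
    have hKc : IsCompact K := (isCompact_closedBall _ _).prod (isCompact_closedBall _ _)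
    have hKne : K.Nonempty :=
      ⟨(0, 0), by constructor <;> simp [Metric.mem_closedBall, Nat.cast_nonneg, hR₁0]⟩
    obtain ⟨q₀, hq₀K, hq₀⟩ := hKc.exists_isMinOn hKne hcont.continuousOn
    refine ⟨max (-(H l q₀.1 q₀.2)) 0, le_max_right _ _, fun x p => ?_⟩
    obtain ⟨k, hk⟩ := exists_intVec_norm_le x
    have hxval : H l x p = H l (x - intVec k) p := by
      conv_lhs => rw [show x = (x - intVec k) + intVec k by abel]
      exact hper _ k p
    rcases le_or_gt ‖p‖ R₁ with hp | hp
    · have hmem : (x - intVec k, p) ∈ K := by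
        constructor <;> simp [Metric.mem_closedBall, dist_eq_norm, hk, hp]
      have := hq₀ hmem
      rw [hxval]
      have h2 : -(max (-(H l q₀.1 q₀.2)) 0) ≤ H l q₀.1 q₀.2 := by
        rcases le_max_iff.mpr (Or.inl (le_refl (-(H l q₀.1 q₀.2)))) with h
        linarith [le_max_left (-(H l q₀.1 q₀.2)) (0:ℝ)]
      exact le_trans h2 this
    · have h0 : (0:ℝ) ≤ α ‖p‖ := hR₀ ‖p‖ (le_trans (le_max_left _ _) hp.le)
      have := (hbd x p).1
      have h3 : -(max (-(H l q₀.1 q₀.2)) 0) ≤ 0 := neg_nonpos.mpr (le_max_right _ _)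
      linarith
  choose A0 hA0 using key
  refine ⟨∑ l, A0 l, Finset.sum_nonneg fun l _ => (hA0 l).1, fun l x p => ?_⟩
  have h1 : A0 l ≤ ∑ l', A0 l' :=
    Finset.single_le_sum (fun l' _ => (hA0 l').1) (Finset.mem_univ l)
  have := (hA0 l).2 x p
  linarith

lemma ham_coercive_radius {N m : ℕ} (H : Fin m → Euc N → Euc N → ℝ)
    (hH : ∀ i, IsConvexHamiltonian (H i)) (C' : ℝ) :
    ∃ R : ℝ, 0 ≤ R ∧ ∀ l x p, H l x p ≤ C' → ‖p‖ ≤ R := by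
  have key : ∀ l, ∃ R : ℝ, 0 ≤ R ∧ ∀ (x : Euc N) (p : Euc N), H l x p ≤ C' → ‖p‖ ≤ R := by
    intro l
    obtain ⟨-, -, -, α, β, hα, hβ, hbd⟩ := hH l
    obtain ⟨R₀, hR₀⟩ := eventually_atTop.mp (hα.eventually_gt_atTop C')
    refine ⟨max R₀ 0, le_max_right _ _, fun x p hp => ?_⟩
    by_contra hcon
    push_neg at hcon
    have h1 : R₀ ≤ ‖p‖ := le_trans (le_max_left _ _) hcon.le
    have := hR₀ ‖p‖ h1
    have := (hbd x p).1
    linarith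
  choose R0 hR0 using key
  refine ⟨∑ l, R0 l, Finset.sum_nonneg fun l _ => (hR0 l).1, fun l x p hp => ?_⟩
  have h1 : R0 l ≤ ∑ l', R0 l' :=
    Finset.single_le_sum (fun l' _ => (hR0 l').1) (Finset.mem_univ l)
  exact le_trans ((hR0 l).2 x p hp) h1

lemma coupling_bound {N m : ℕ} (B : Euc N → Fin m → Fin m → ℝ)
    (hB : IsCouplingField B) :
    ∃ C : ℝ, 0 ≤ C ∧ ∀ x l j, |B x l j| ≤ C := by
  have key : ∀ l j : Fin m, ∃ M : ℝ, 0 ≤ M ∧ ∀ x, |B x l j| ≤ M :=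
    fun l j => periodic_bound (hB.1 l j) (hB.2.1 l j)
  choose M hM using key
  refine ⟨∑ l, ∑ j, M l j,
    Finset.sum_nonneg fun l _ => Finset.sum_nonneg fun j _ => (hM l j).1, fun x l j => ?_⟩
  have h1 : M l j ≤ ∑ j', M l j' :=
    Finset.single_le_sum (fun j' _ => (hM l j').1) (Finset.mem_univ j)
  have h2 : ∑ j', M l j' ≤ ∑ l', ∑ j', M l' j' :=
    Finset.single_le_sum (f := fun l' => ∑ j', M l' j')
      (fun l' _ => Finset.sum_nonneg fun j' _ => (hM l' j').1) (Finset.mem_univ l)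
  exact le_trans ((hM l j).2 x) (le_trans h1 h2)

lemma nnpp {a b : ℝ} (ha : a ≤ 0) (hb : b ≤ 0) : 0 ≤ a * b := by nlinarith

lemma row_rewrite {N m : ℕ} (B : Euc N → Fin m → Fin m → ℝ) (hB : IsCouplingField B)
    (x : Euc N) (l : Fin m) (w : Fin m → ℝ) (t : ℝ) :
    ∑ k, B x l k * w k = ∑ k, B x l k * (w k - t) := by
  have hdeg := (hB.2.2 x).2.1 l
  simp only [mul_sub, Finset.sum_sub_distrib, ← Finset.sum_mul, hdeg]
  ring

lemma top_row_nonneg {N m : ℕ} (B : Euc N → Fin m → Fin m → ℝ) (hB : IsCouplingField B)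
    (hm : 0 < m) (x : Euc N) (w : Fin m → ℝ) :
    ∃ l, (∀ k, w k ≤ w l) ∧ 0 ≤ ∑ k, B x l k * w k := by
  have : Nonempty (Fin m) := ⟨⟨0, hm⟩⟩
  obtain ⟨l, -, hl⟩ := Finset.exists_max_image Finset.univ w Finset.univ_nonempty
  refine ⟨l, fun k => hl k (Finset.mem_univ k), ?_⟩
  rw [row_rewrite B hB x l w (w l)]
  apply Finset.sum_nonneg
  intro k _
  rcases eq_or_ne k l with rfl | hk
  · simp
  · exact nnpp ((hB.2.2 x).1.1 l k hk) (by linarith [hl k (Finset.mem_univ k)])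

lemma quant_irred {N m : ℕ} (hm : 0 < m) (B : Euc N → Fin m → Fin m → ℝ)
    (hB : IsCouplingField B) :
    ∃ c₀ : ℝ, 0 < c₀ ∧ ∀ (x : Euc N) (w : Fin m → ℝ) (a b : Fin m),
      ∃ l, c₀ * (w a - w b) ≤ ∑ k, B x l k * w k := by
  have : Nonempty (Fin m) := ⟨⟨0, hm⟩⟩
  have hne : (Finset.univ : Finset (Fin m)).Nonempty := Finset.univ_nonempty
  -- the compact set of normalized vectors
  by_cases hm2 : 2 ≤ m
  swap
  · -- m = 1 : everything trivial
    refine ⟨1, one_pos, fun x w a b => ?_⟩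
    have hab : a = b := by
      have hm1 : m = 1 := by omega
      subst hm1
      exact Subsingleton.elim a b
    subst hab
    obtain ⟨l, -, hl⟩ := top_row_nonneg B hB hm x w
    exact ⟨l, by simpa using hl⟩
  · set W : Set (Fin m → ℝ) :=
      {w | (∀ k, w k ∈ Set.Icc (0:ℝ) 1) ∧ (∃ a, w a = 1) ∧ (∃ b, w b = 0)} with hW
    have hW1 : IsClosed {w : Fin m → ℝ | ∀ k, w k ∈ Set.Icc (0:ℝ) 1} := by
      rw [Set.setOf_forall]
      exact isClosed_iInter fun k => isClosed_Icc.preimage (continuous_apply k)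
    have hW2 : IsClosed {w : Fin m → ℝ | ∃ a, w a = 1} := by
      rw [Set.setOf_exists]
      exact isClosed_iUnion_of_finite fun a =>
        isClosed_eq (continuous_apply a) continuous_const
    have hW3 : IsClosed {w : Fin m → ℝ | ∃ b, w b = 0} := by
      rw [Set.setOf_exists]
      exact isClosed_iUnion_of_finite fun b =>
        isClosed_eq (continuous_apply b) continuous_const
    have hWclosed : IsClosed W := by
      rw [hW, Set.setOf_and, Set.setOf_and]
      exact hW1.inter (hW2.inter hW3)
    have hWcompact : IsCompact W := by
      refine IsCompact.of_isClosed_subset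
        (isCompact_univ_pi (s := fun _ : Fin m => Set.Icc (0:ℝ) 1) fun _ => isCompact_Icc)
        hWclosed ?_
      intro w hw
      exact fun k _ => hw.1 k
    set K : Set (Euc N × (Fin m → ℝ)) := (Metric.closedBall (0 : Euc N) N) ×ˢ W with hK
    have hKc : IsCompact K := (isCompact_closedBall _ _).prod hWcompact
    have hKne : K.Nonempty := by
      refine ⟨(0, fun k => if k = ⟨0, hm⟩ then 1 else 0), ?_, ?_⟩
      · simp [Metric.mem_closedBall]
      · refine ⟨fun k => ?_, ⟨⟨0, hm⟩, by simp⟩, ⟨⟨1, by omega⟩, ?_⟩⟩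
        · by_cases h : k = ⟨0, hm⟩ <;> simp [h]
        · have : (⟨1, by omega⟩ : Fin m) ≠ ⟨0, hm⟩ := by simp [Fin.ext_iff]
          simp [this]
    set g : Euc N × (Fin m → ℝ) → ℝ :=
      fun q => Finset.univ.sup' hne (fun l => ∑ k, B q.1 l k * q.2 k) with hg
    have hgcont : Continuous g := by
      rw [continuous_iff_continuousAt]
      intro q
      apply ContinuousAt.finset_sup'_apply hne
      intro l _
      apply Continuous.continuousAt
      exact continuous_finset_sum _ fun k _ =>
        ((hB.1 l k).comp continuous_fst).mul ((continuous_apply k).comp continuous_snd)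
    have hgpos : ∀ q ∈ K, 0 < g q := by
      rintro ⟨x, w⟩ ⟨hx, hw⟩
      obtain ⟨ha, hb⟩ := hw.2
      obtain ⟨a, ha⟩ := ha
      obtain ⟨b, hb⟩ := hb
      replace ha : w a = 1 := ha
      replace hb : w b = 0 := hb
      set I : Finset (Fin m) := Finset.univ.filter (fun k => w k = 1) with hI
      have hIne : I.Nonempty := ⟨a, by simp only [hI, Finset.mem_filter]; exact ⟨Finset.mem_univ a, ha⟩⟩
      have hInu : I ≠ Finset.univ := by
        intro hcon
        have hbI : b ∈ I := hcon ▸ Finset.mem_univ b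
        simp only [hI, Finset.mem_filter] at hbI
        rw [hb] at hbI
        exact one_ne_zero hbI.2.symm
      obtain ⟨l, hlI, k₀, hk₀I, hBlk₀⟩ := (hB.2.2 x).2.2 I hIne hInu
      have hwl : w l = 1 := by simpa [hI] using hlI
      have hwk₀ : w k₀ < 1 := by
        have h1 : w k₀ ≠ 1 := by simpa [hI] using hk₀I
        exact lt_of_le_of_ne (hw.1 k₀).2 h1
      have hk₀l : k₀ ≠ l := fun h => hk₀I (h ▸ hlI)
      have hBneg : B x l k₀ < 0 :=
        lt_of_le_of_ne ((hB.2.2 x).1.1 l k₀ hk₀l) hBlk₀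
      have hrow : 0 < ∑ k, B x l k * w k := by
        rw [row_rewrite B hB x l w 1]
        have hterm : ∀ k ∈ Finset.univ, (0:ℝ) ≤ B x l k * (w k - 1) := by
          intro k _
          rcases eq_or_ne k l with rfl | hk
          · simp [hwl]
          · exact nnpp ((hB.2.2 x).1.1 l k hk) (by linarith [(hw.1 k).2])
        have hsingle : B x l k₀ * (w k₀ - 1) ≤ ∑ k, B x l k * (w k - 1) :=
          Finset.single_le_sum hterm (Finset.mem_univ k₀)
        have : 0 < B x l k₀ * (w k₀ - 1) := mul_pos_of_neg_of_neg hBneg (by linarith)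
        linarith
      calc (0:ℝ) < ∑ k, B x l k * w k := hrow
        _ ≤ g (x, w) := by
            rw [hg]
            exact Finset.le_sup' (fun l => ∑ k, B x l k * w k) (Finset.mem_univ l)
    obtain ⟨q₀, hq₀K, hq₀min⟩ := hKc.exists_isMinOn hKne hgcont.continuousOn
    refine ⟨g q₀, hgpos q₀ hq₀K, fun x w a b => ?_⟩
    rcases le_or_gt (w a - w b) 0 with hab | hab
    · obtain ⟨l, -, hl⟩ := top_row_nonneg B hB hm x w
      exact ⟨l, le_trans (mul_nonpos_of_nonneg_of_nonpos (hgpos q₀ hq₀K).le hab) hl⟩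
    · obtain ⟨lmax, -, hlmax⟩ := Finset.exists_max_image Finset.univ w Finset.univ_nonempty
      obtain ⟨lmin, -, hlmin⟩ := Finset.exists_min_image Finset.univ w Finset.univ_nonempty
      set osc := w lmax - w lmin with hosc
      have hosct : w a - w b ≤ osc := by
        have h1 := hlmax a (Finset.mem_univ a)
        have h2 := hlmin b (Finset.mem_univ b)
        rw [hosc]; linarith
      have hoscpos : 0 < osc := lt_of_lt_of_le hab hosct
      set wh : Fin m → ℝ := fun k => (w k - w lmin) / osc with hwh
      obtain ⟨kv, hkv⟩ := exists_intVec_norm_le x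
      have hBper : ∀ l k : Fin m, B x l k = B (x - intVec kv) l k := by
        intro l k
        conv_lhs => rw [show x = (x - intVec kv) + intVec kv by abel]
        exact hB.2.1 l k _ kv
      have hmem : (x - intVec kv, wh) ∈ K := by
        constructor
        · simpa [Metric.mem_closedBall, dist_eq_norm] using hkv
        · refine ⟨fun k => ?_, ⟨lmax, ?_⟩, ⟨lmin, ?_⟩⟩
          · constructor
            · apply div_nonneg _ hoscpos.le
              linarith [hlmin k (Finset.mem_univ k)]
            · rw [div_le_one hoscpos]
              have := hlmax k (Finset.mem_univ k)
              rw [hosc]; linarith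
          · rw [hwh]; field_simp; exact hosc.symm
          · rw [hwh]; simp
      obtain ⟨l, -, hsup⟩ := Finset.exists_mem_eq_sup' hne
        (fun l => ∑ k, B (x - intVec kv) l k * wh k)
      have hval : g q₀ ≤ ∑ k, B (x - intVec kv) l k * wh k := by
        have := hq₀min hmem
        rw [hg] at this
        simp only at this
        rw [← hsup]
        exact this
      refine ⟨l, ?_⟩
      have hrowid : ∑ k, B x l k * w k = osc * ∑ k, B (x - intVec kv) l k * wh k := by
        rw [Finset.mul_sum, row_rewrite B hB x l w (w lmin)]
        apply Finset.sum_congr rfl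
        intro k _
        rw [← hBper l k, hwh]
        field_simp
        try ring
      rw [hrowid]
      calc g q₀ * (w a - w b) ≤ g q₀ * osc := by
            apply mul_le_mul_of_nonneg_left hosct (hgpos q₀ hq₀K).le
        _ = osc * g q₀ := mul_comm _ _
        _ ≤ osc * ∑ k, B (x - intVec kv) l k * wh k := by
            apply mul_le_mul_of_nonneg_left hval hoscpos.le

lemma crit_row_le {N m : ℕ} {H : Fin m → Euc N → Euc N → ℝ} {B : Euc N → Fin m → Fin m → ℝ}
    (hB : IsCouplingField B) {A : ℝ} (hA : ∀ (l : Fin m) (x p : Euc N), -A ≤ H l x p)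
    {v : Fin m → Euc N → ℝ} (hv : v ∈ Crit H B) (l : Fin m) (x : Euc N) :
    ∑ j, B x l j * v j x ≤ A := by
  obtain ⟨M, hM0, hMb⟩ := periodic_bound (hv.1.1 l) (hv.1.2 l)
  have key : ∀ n : ℕ, 4*M+1 ≤ (n:ℝ) →
      ∃ z : Euc N, ‖z - x‖^2 ≤ 4*M/(n:ℝ) ∧ ∑ j, B z l j * v j z ≤ A := by
    intro n hn
    have hnpos : (0:ℝ) < n := by linarith
    set nn := (n:ℝ) with hnn
    set φ : Euc N → ℝ := fun z => (nn/2) * ⟪z - x, z - x⟫ with hφ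
    have hφcont : Continuous φ := (contDiff_quad (nn/2) x).continuous
    obtain ⟨z, hzK, hzmax⟩ := (isCompact_closedBall x 1).exists_isMaxOn
      ⟨x, Metric.mem_closedBall_self zero_le_one⟩
      (((hv.1.1 l).sub hφcont).continuousOn)
    have hφx : φ x = 0 := by simp [hφ]
    have hcenter : v l x - φ x ≤ v l z - φ z := hzmax (Metric.mem_closedBall_self zero_le_one)
    have hφz : φ z = (nn/2) * ‖z - x‖^2 := by simp only [hφ]; rw [quad_inner_eq_norm]
    have hdist2 : ‖z - x‖^2 ≤ 4*M/nn := by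
      have h1 : v l x ≤ v l z - (nn/2) * ‖z - x‖^2 := by
        rw [hφx] at hcenter; rw [hφz] at hcenter; linarith
      have h2 : v l z ≤ M := le_trans (le_abs_self _) (hMb z)
      have h3 : -M ≤ v l x := by have := (abs_le.mp (hMb x)).1; linarith
      rw [le_div_iff₀ hnpos]
      nlinarith
    have hdistlt : ‖z - x‖ < 1 := by
      by_contra hcon
      push_neg at hcon
      have : (1:ℝ) ≤ ‖z - x‖^2 := by nlinarith
      have : 4*M/nn < 1 := by rw [div_lt_one hnpos]; linarith
      linarith [hdist2]
    have hnhds : Metric.closedBall x 1 ∈ 𝓝 z :=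
      Filter.mem_of_superset (Metric.isOpen_ball.mem_nhds
        (by simpa [Metric.mem_ball, dist_eq_norm] using hdistlt))
        Metric.ball_subset_closedBall
    have hloc : IsLocalMax (fun t => v l t - φ t) z := hzmax.isLocalMax hnhds
    have hsub : H l z (gradient φ z) + ∑ j, B z l j * v j z ≤ 0 :=
      hv.2 l z φ (contDiff_quad (nn/2) x) hloc
    have hHlb := hA l z (gradient φ z)
    exact ⟨z, hdist2, by linarith⟩
  obtain ⟨n₀, hn₀⟩ := exists_nat_ge (4*M+1)
  have key2 : ∀ n : ℕ, ∃ z : Euc N, ‖z - x‖^2 ≤ 4*M/((n:ℝ) + (n₀+1)) ∧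
      ∑ j, B z l j * v j z ≤ A := by
    intro n
    obtain ⟨z, h1, h2⟩ := key (n + (n₀+1)) (by push_cast; linarith [Nat.cast_nonneg (α := ℝ) n])
    exact ⟨z, by push_cast at h1 ⊢; linarith [h1], h2⟩
  choose zz hz1 hz2 using key2
  have hztend : Tendsto zz atTop (𝓝 x) := by
    rw [tendsto_iff_dist_tendsto_zero]
    have hub : ∀ n : ℕ, dist (zz n) x ≤ Real.sqrt (4*M/((n:ℝ)+(n₀+1))) := by
      intro n
      rw [dist_eq_norm]
      have := hz1 n
      rw [show (4:ℝ)*M/((n:ℝ)+(n₀+1)) = (Real.sqrt (4*M/((n:ℝ)+(n₀+1))))^2 by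
        rw [Real.sq_sqrt]; positivity] at this
      have h0 := Real.sqrt_nonneg (4*M/((n:ℝ)+(n₀+1)))
      nlinarith [norm_nonneg (zz n - x)]
    have hlb : ∀ n : ℕ, (0:ℝ) ≤ dist (zz n) x := fun n => dist_nonneg
    have htt : Tendsto (fun n : ℕ => Real.sqrt (4*M/((n:ℝ)+(n₀+1)))) atTop (𝓝 0) := by
      rw [show (0:ℝ) = Real.sqrt 0 by simp]
      apply (Real.continuous_sqrt.tendsto 0).comp
      apply Tendsto.div_atTop tendsto_const_nhds
      apply tendsto_atTop_add_const_right
      exact tendsto_natCast_atTop_atTop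
    exact tendsto_of_tendsto_of_tendsto_of_le_of_le tendsto_const_nhds htt hlb hub
  have hrowcont : Continuous (fun z : Euc N => ∑ j, B z l j * v j z) :=
    continuous_finset_sum _ fun j _ => (hB.1 l j).mul (hv.1.1 j)
  exact le_of_tendsto ((hrowcont.tendsto x).comp hztend) (Filter.Eventually.of_forall hz2)

lemma lip_of_touch {N : ℕ} (w : Euc N → ℝ) (hw : Continuous w) (M : ℝ) (hM0 : 0 ≤ M)
    (hM : ∀ x, |w x| ≤ M) (R : ℝ) (hR : 0 ≤ R)
    (htouch : ∀ (z : Euc N) (φ : Euc N → ℝ), ContDiff ℝ 1 φ →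
      IsLocalMax (fun t => w t - φ t) z → ‖gradient φ z‖ ≤ R) :
    ∀ x x' : Euc N, w x' - w x ≤ (R+1) * ‖x' - x‖ := by
  intro x x'
  obtain ⟨n₀, hn₀⟩ := exists_nat_ge (max (4*M+1) (2*R+2))
  have key : ∀ n : ℕ, ∃ zz : Euc N, ‖zz - x‖ ≤ R/((n:ℝ)+((n₀:ℝ)+1)) ∧
      w x' - w x ≤ (R+1) * ‖x' - x‖ + (w zz - w x) := by
    intro n
    set nn : ℝ := (n:ℝ) + ((n₀:ℝ)+1) with hnn
    have hnn1 : 4*M+1 ≤ nn ∧ 2*R+2 ≤ nn := by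
      constructor <;>
        (rw [hnn];
         nlinarith [Nat.cast_nonneg (α := ℝ) n, le_max_left (4*M+1) (2*R+2),
           le_max_right (4*M+1) (2*R+2), hn₀])
    clear_value nn
    have hnpos : (0:ℝ) < nn := by linarith [hnn1.1]
    have hmax : ∀ ξ : Euc N, ∃ z ∈ Metric.closedBall ξ 1,
        IsMaxOn (fun z => w z - (nn/2) * ⟪z - ξ, z - ξ⟫) (Metric.closedBall ξ 1) z := by
      intro ξ
      obtain ⟨z, hz1, hz2⟩ := (isCompact_closedBall ξ 1).exists_isMaxOn
        ⟨ξ, Metric.mem_closedBall_self zero_le_one⟩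
        ((hw.sub (contDiff_quad (nn/2) ξ).continuous).continuousOn)
      exact ⟨z, hz1, hz2⟩
    choose ζ hζmem hζmax using hmax
    set Wf : Euc N → ℝ := fun ξ => w (ζ ξ) - (nn/2) * ⟪ζ ξ - ξ, ζ ξ - ξ⟫ with hWf
    have hval : ∀ ξ, Wf ξ = w (ζ ξ) - (nn/2) * ‖ζ ξ - ξ‖^2 := by
      intro ξ; rw [hWf]; simp only; rw [quad_inner_eq_norm]
    have hWge : ∀ ξ z, z ∈ Metric.closedBall ξ 1 →
        w z - (nn/2) * ⟪z - ξ, z - ξ⟫ ≤ Wf ξ := fun ξ z hz => hζmax ξ hz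
    have hwle : ∀ ξ, w ξ ≤ Wf ξ := by
      intro ξ
      have := hWge ξ ξ (Metric.mem_closedBall_self zero_le_one)
      simpa using this
    have hζdist : ∀ ξ, ‖ζ ξ - ξ‖ ≤ R/nn := by
      intro ξ
      have hcenter' : w ξ ≤ Wf ξ := hwle ξ
      have hd2 : ‖ζ ξ - ξ‖^2 ≤ 4*M/nn := by
        have h2 : w (ζ ξ) ≤ M := le_trans (le_abs_self _) (hM _)
        have h3 : -M ≤ w ξ := (abs_le.mp (hM _)).1
        rw [le_div_iff₀ hnpos]
        rw [hval ξ] at hcenter'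
        nlinarith
      have hdlt : ‖ζ ξ - ξ‖ < 1 := by
        by_contra hcon
        push_neg at hcon
        have h5 : (1:ℝ) ≤ ‖ζ ξ - ξ‖^2 := by nlinarith
        have h6 : 4*M/nn < 1 := by rw [div_lt_one hnpos]; linarith [hnn1.1]
        linarith
      have hnhds : Metric.closedBall ξ 1 ∈ 𝓝 (ζ ξ) :=
        Filter.mem_of_superset (Metric.isOpen_ball.mem_nhds
          (by simpa [Metric.mem_ball, dist_eq_norm] using hdlt))
          Metric.ball_subset_closedBall
      have hloc : IsLocalMax (fun t => w t - (nn/2) * ⟪t - ξ, t - ξ⟫) (ζ ξ) :=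
        (hζmax ξ).isLocalMax hnhds
      have hgrad := htouch (ζ ξ) (fun t => (nn/2) * ⟪t - ξ, t - ξ⟫)
        (contDiff_quad (nn/2) ξ) hloc
      rw [gradient_quad (nn/2) ξ (ζ ξ), show 2*(nn/2) = nn by ring, norm_smul,
        Real.norm_eq_abs, abs_of_pos hnpos] at hgrad
      rw [le_div_iff₀ hnpos]
      nlinarith [hgrad]
    have hsmall : ∀ ξ ξ' : Euc N, ‖ξ' - ξ‖ ≤ 1/nn → Wf ξ' - Wf ξ ≤ (R+1) * ‖ξ' - ξ‖ := by
      intro ξ ξ' hd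
      have hd0 : (0:ℝ) ≤ ‖ξ' - ξ‖ := norm_nonneg _
      have hmem : ζ ξ' ∈ Metric.closedBall ξ 1 := by
        rw [Metric.mem_closedBall, dist_eq_norm]
        have h1 : ‖ζ ξ' - ξ‖ ≤ ‖ζ ξ' - ξ'‖ + ‖ξ' - ξ‖ := norm_sub_le_norm_sub_add_norm_sub _ _ _
        have h2 := hζdist ξ'
        have h3 : R/nn ≤ 1/2 := by rw [div_le_iff₀ hnpos]; linarith [hnn1.2]
        have h4 : 1/nn ≤ 1/2 := by
          rw [div_le_div_iff₀ hnpos (by norm_num : (0:ℝ) < 2)]; linarith [hnn1.2, hR]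
        linarith
      have h5 := hWge ξ (ζ ξ') hmem
      have hexp : ⟪ζ ξ' - ξ, ζ ξ' - ξ⟫
          = ⟪ζ ξ' - ξ', ζ ξ' - ξ'⟫ + 2*⟪ζ ξ' - ξ', ξ' - ξ⟫ + ⟪ξ' - ξ, ξ' - ξ⟫ := by
        rw [show ζ ξ' - ξ = (ζ ξ' - ξ') + (ξ' - ξ) by abel, real_inner_add_add_self]
        try ring
      have hcs : ⟪ζ ξ' - ξ', ξ' - ξ⟫ ≤ (R/nn) * ‖ξ' - ξ‖ :=
        le_trans (real_inner_le_norm _ _) (mul_le_mul_of_nonneg_right (hζdist ξ') hd0)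
      have hsq : ⟪ξ' - ξ, ξ' - ξ⟫ ≤ (1/nn) * ‖ξ' - ξ‖ := by
        rw [quad_inner_eq_norm]
        nlinarith
      have hstep : Wf ξ' - Wf ξ
          ≤ (nn/2) * (⟪ζ ξ' - ξ, ζ ξ' - ξ⟫ - ⟪ζ ξ' - ξ', ζ ξ' - ξ'⟫) := by
        have h6 : Wf ξ' = w (ζ ξ') - (nn/2) * ⟪ζ ξ' - ξ', ζ ξ' - ξ'⟫ := by rw [hWf]
        rw [h6]
        linarith [h5]
      calc Wf ξ' - Wf ξ ≤ (nn/2) * (⟪ζ ξ' - ξ, ζ ξ' - ξ⟫ - ⟪ζ ξ' - ξ', ζ ξ' - ξ'⟫) := hstep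
        _ = (nn/2) * (2*⟪ζ ξ' - ξ', ξ' - ξ⟫ + ⟪ξ' - ξ, ξ' - ξ⟫) := by rw [hexp]; ring
        _ ≤ (nn/2) * (2*((R/nn) * ‖ξ' - ξ‖) + (1/nn) * ‖ξ' - ξ‖) := by
            apply mul_le_mul_of_nonneg_left _ (by positivity)
            linarith [hcs, hsq]
        _ = (R + 1/2) * ‖ξ' - ξ‖ := by field_simp
        _ ≤ (R+1) * ‖ξ' - ξ‖ := by nlinarith
    have hglobal := chain_lipschitz Wf (R+1) (1/nn) (by positivity) hsmall x x'
    refine ⟨ζ x, hζdist x, ?_⟩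
    have hWx' : w x' ≤ Wf x' := hwle x'
    have hWx : Wf x ≤ w (ζ x) := by
      rw [hval x]
      nlinarith [sq_nonneg ‖ζ x - x‖]
    linarith
  choose zz hz1 hz2 using key
  have hztend : Tendsto zz atTop (𝓝 x) := by
    rw [tendsto_iff_dist_tendsto_zero]
    have hbound : Tendsto (fun n : ℕ => R/((n:ℝ)+((n₀:ℝ)+1))) atTop (𝓝 0) := by
      apply Tendsto.div_atTop tendsto_const_nhds
      apply tendsto_atTop_add_const_right
      exact tendsto_natCast_atTop_atTop
    exact tendsto_of_tendsto_of_tendsto_of_le_of_le tendsto_const_nhds hbound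
      (fun n => dist_nonneg) (fun n => by rw [dist_eq_norm]; exact hz1 n)
  have hlim : Tendsto (fun n => (R+1) * ‖x' - x‖ + (w (zz n) - w x)) atTop
      (𝓝 ((R+1) * ‖x' - x‖ + (w x - w x))) :=
    tendsto_const_nhds.add (((hw.tendsto x).comp hztend).sub tendsto_const_nhds)
  have := ge_of_tendsto hlim (Filter.Eventually.of_forall hz2)
  simpa using this

lemma quad_symm {N : ℕ} (a b : Euc N) : ⟪a - b, a - b⟫ = ⟪b - a, b - a⟫ := by
  rw [show a - b = -(b - a) by abel, inner_neg_neg]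

lemma tendsto_div_nat (c : ℝ) : Tendsto (fun n : ℕ => c/((n:ℝ)+1)) atTop (𝓝 0) := by
  apply Tendsto.div_atTop tendsto_const_nhds
  apply tendsto_atTop_add_const_right
  exact tendsto_natCast_atTop_atTop

lemma tendsto_of_dist_bound {N : ℕ} (u : ℕ → Euc N) (x : Euc N) (b : ℕ → ℝ)
    (hb : Tendsto b atTop (𝓝 0)) (h : ∀ n, ‖u n - x‖ ≤ b n) :
    Tendsto u atTop (𝓝 x) := by
  rw [tendsto_iff_dist_tendsto_zero]
  exact tendsto_of_tendsto_of_tendsto_of_le_of_le tendsto_const_nhds hb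
    (fun n => dist_nonneg) (fun n => by rw [dist_eq_norm]; exact h n)

lemma tendsto_sqrt_div_nat (c : ℝ) :
    Tendsto (fun n : ℕ => Real.sqrt (c/((n:ℝ)+1))) atTop (𝓝 0) := by
  rw [show (0:ℝ) = Real.sqrt 0 by simp]
  exact (Real.continuous_sqrt.tendsto 0).comp (tendsto_div_nat c)

lemma crit_shift {N m : ℕ} {H : Fin m → Euc N → Euc N → ℝ} {B : Euc N → Fin m → Fin m → ℝ}
    (hB : IsCouplingField B) {v : Fin m → Euc N → ℝ} (hv : v ∈ Crit H B) (c : ℝ) :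
    (fun j x => v j x + c) ∈ Crit H B := by
  constructor
  · refine ⟨fun l => (hv.1.1 l).add continuous_const, fun l x k => ?_⟩
    show v l (x + intVec k) + c = v l x + c
    rw [hv.1.2 l x k]
  · intro l x φ hφ hmax
    have heq : (fun t => (fun j s => v j s + c) l t - φ t) = (fun t => v l t - (φ t - c)) := by
      funext t
      show v l t + c - φ t = v l t - (φ t - c)
      ring
    rw [heq] at hmax
    have hsub := hv.2 l x (fun t => φ t - c) (hφ.sub contDiff_const) hmax
    have hgrad : gradient (fun t => φ t - c) x = gradient φ x := by
      unfold gradient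
      rw [fderiv_sub_const]
    rw [hgrad] at hsub
    have hsum : ∑ j, B x l j * (v j x + c) = ∑ j, B x l j * v j x := by
      simp only [mul_add, Finset.sum_add_distrib, ← Finset.sum_mul, (hB.2.2 x).2.1 l]
      ring
    show H l x (gradient φ x) + ∑ j, B x l j * (v j x + c) ≤ 0
    rw [hsum]
    exact hsub

lemma crit_touch_bound {N m : ℕ} {H : Fin m → Euc N → Euc N → ℝ}
    {B : Euc N → Fin m → Fin m → ℝ} (hB : IsCouplingField B)
    {βB K : ℝ} (hβB : ∀ x l j, |B x l j| ≤ βB)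
    (hosc : ∀ v ∈ Crit H B, ∀ (x : Euc N) (a b : Fin m), v a x - v b x ≤ K)
    {v : Fin m → Euc N → ℝ} (hv : v ∈ Crit H B) (l : Fin m) (z : Euc N) (φ : Euc N → ℝ)
    (hφ : ContDiff ℝ 1 φ) (hmax : IsLocalMax (fun t => v l t - φ t) z) :
    H l z (gradient φ z) ≤ m * (βB * K) := by
  have hK0 : 0 ≤ K := by
    have := hosc v hv z l l
    linarith
  have hβB0 : 0 ≤ βB := le_trans (abs_nonneg _) (hβB z l l)
  have hsub : H l z (gradient φ z) + ∑ j, B z l j * v j z ≤ 0 := hv.2 l z φ hφ hmax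
  have hrow : -(∑ j, B z l j * v j z) ≤ m * (βB * K) := by
    rw [row_rewrite B hB z l (fun j => v j z) (v l z)]
    rw [← Finset.sum_neg_distrib]
    calc ∑ j, -(B z l j * (v j z - v l z)) ≤ ∑ _j : Fin m, βB * K := by
          apply Finset.sum_le_sum
          intro j _
          have h1 : |B z l j * (v j z - v l z)| ≤ βB * K := by
            rw [abs_mul]
            apply mul_le_mul (hβB z l j) _ (abs_nonneg _) hβB0
            rw [abs_le]
            exact ⟨by linarith [hosc v hv z l j], hosc v hv z j l⟩
          linarith [(abs_le.mp h1).1]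
      _ = m * (βB * K) := by
          rw [Finset.sum_const, Finset.card_univ, Fintype.card_fin, nsmul_eq_mul]
  linarith

set_option maxHeartbeats 1000000 in
lemma doubling_step {N m : ℕ}
    (H : Fin m → Euc N → Euc N → ℝ) (hH : ∀ i, IsConvexHamiltonian (H i))
    (B : Euc N → Fin m → Fin m → ℝ) (hB : IsCouplingField B)
    (y : Euc N) (i : Fin m)
    (hsuper : IsSuperSol H B (fun _ => 0) (fun l x => Mane H B l i y x))
    (hCne : (Crit H B).Nonempty)
    {R βB : ℝ} (hR0 : 0 ≤ R) (hβB : ∀ x l j, |B x l j| ≤ βB)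
    (hbdd : ∀ (l : Fin m) (x : Euc N), BddAbove ((fun v => v l x - v i y) '' Crit H B))
    (hlip : ∀ v ∈ Crit H B, ∀ (l : Fin m) (x x' : Euc N), v l x' - v l x ≤ (R+1) * ‖x' - x‖)
    {vt : Fin m → Euc N → ℝ} (hvtmem : vt ∈ Crit H B) (hvtiy : vt i y = 0)
    (l j : Fin m) (hjl : j ≠ l)
    (hFl : Mane H B l i y y = vt l y)
    (hBylj : B y l j ≠ 0) :
    Mane H B j i y y ≤ vt j y := by
  by_contra hcon
  push_neg at hcon
  have hβB0 : 0 ≤ βB := le_trans (abs_nonneg _) (hβB y l l)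
  have hmane_le : ∀ v ∈ Crit H B, ∀ (k : Fin m) (x : Euc N),
      v k x - v i y ≤ Mane H B k i y x :=
    fun v hv k x => le_csSup (hbdd k x) ⟨v, hv, rfl⟩
  have hF : ∀ (k : Fin m) (x : Euc N), vt k x ≤ Mane H B k i y x := by
    intro k x
    have := hmane_le vt hvtmem k x
    rw [hvtiy] at this
    linarith
  have hFnonneg : ∀ (k : Fin m) (x : Euc N), 0 ≤ Mane H B k i y x - vt k x :=
    fun k x => by linarith [hF k x]
  have hlsc : ∀ k : Fin m, LowerSemicontinuous (fun x => Mane H B k i y x) := by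
    intro k x c hc
    obtain ⟨s, hsmem, hlt⟩ := exists_lt_of_lt_csSup (hCne.image _) hc
    obtain ⟨w, hw, rfl⟩ := hsmem
    have hev : ∀ᶠ x' in 𝓝 x, c < w k x' - w i y :=
      (((hw.1.1 k).sub continuous_const).tendsto x).eventually_const_lt hlt
    filter_upwards [hev] with x' h
    exact lt_of_lt_of_le h (hmane_le w hw k x')
  set θ := Mane H B j i y y - vt j y with hθ
  have hθpos : 0 < θ := by rw [hθ]; linarith
  clear_value θ
  have hμneg : B y l j < 0 := lt_of_le_of_ne ((hB.2.2 y).1.1 l j hjl) hBylj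
  set μ := -(B y l j) with hμdef
  have hμpos : 0 < μ := by rw [hμdef]; linarith
  clear_value μ
  -- witness for the j-component near y
  obtain ⟨s, hsmem, hslt⟩ := exists_lt_of_lt_csSup (hCne.image _)
    (show Mane H B j i y y - θ/4 < Mane H B j i y y by linarith)
  obtain ⟨wv, hwv, rfl⟩ := hsmem
  have hev1 : ∀ᶠ x in 𝓝 y, θ/2 < Mane H B j i y x - vt j x := by
    have hcc : Continuous (fun x => (wv j x - wv i y) - vt j x) :=
      ((hwv.1.1 j).sub continuous_const).sub (hvtmem.1.1 j)
    have hval : θ/2 < (wv j y - wv i y) - vt j y := by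
      have h9 : Mane H B j i y y - θ/4 < wv j y - wv i y := hslt
      rw [hθ]
      linarith
    have := (hcc.tendsto y).eventually_const_lt hval
    filter_upwards [this] with x hx
    have := hmane_le wv hwv j x
    linarith
  have hev2 : ∀ᶠ x in 𝓝 y, B x l j < -(μ/2) := by
    have hval : B y l j < -(μ/2) := by rw [hμdef]; linarith
    exact ((hB.1 l j).tendsto y).eventually_lt_const hval
  obtain ⟨Mv, hMv0, hMv⟩ := periodic_bound (hvtmem.1.1 l) (hvtmem.1.2 l)
  set Λ : ℝ := 8*Mv + 8 with hΛ
  have hΛpos : 0 < Λ := by rw [hΛ]; linarith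
  clear_value Λ
  -- the key construction
  have key : ∀ n : ℕ, 8*(R+1)+1 ≤ (n:ℝ) → ∃ xx zz q : Euc N,
      ‖zz - xx‖ ≤ 2*(R+1)/(n:ℝ) ∧
      ‖xx - y‖^2 ≤ (2*(R+1)^2/Λ)/(n:ℝ) ∧
      ‖q‖ ≤ 2*(R+1) ∧
      H l zz q + (∑ k, B zz l k * vt k zz) ≤ 0 ∧
      0 ≤ H l xx (q - (2*Λ) • (xx - y)) + (∑ k, B xx l k * Mane H B k i y xx) ∧
      Mane H B l i y xx - vt l xx ≤ (R+1) * ‖zz - xx‖ := by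
    intro n hn
    have hnpos : (0:ℝ) < n := by linarith
    have hDc : IsCompact ((Metric.closedBall y 1) ×ˢ (Metric.closedBall y 1)) :=
      (isCompact_closedBall _ _).prod (isCompact_closedBall _ _)
    have hDne : ((Metric.closedBall y 1) ×ˢ (Metric.closedBall y 1)).Nonempty :=
      ⟨(y,y), ⟨Metric.mem_closedBall_self zero_le_one, Metric.mem_closedBall_self zero_le_one⟩⟩
    set g : Euc N × Euc N → ℝ := fun pr =>
      vt l pr.2 - ((n:ℝ)/2) * ⟪pr.2 - pr.1, pr.2 - pr.1⟫ - Λ * ⟪pr.1 - y, pr.1 - y⟫ with hg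
    have hgcont : Continuous g := by
      apply Continuous.sub
      apply Continuous.sub
      · exact (hvtmem.1.1 l).comp continuous_snd
      · exact continuous_const.mul
          ((continuous_snd.sub continuous_fst).inner (continuous_snd.sub continuous_fst))
      · exact continuous_const.mul
          ((continuous_fst.sub continuous_const).inner (continuous_fst.sub continuous_const))
    have hbd : ∀ pr ∈ (Metric.closedBall y 1) ×ˢ (Metric.closedBall y 1),
        -Mv ≤ Mane H B l i y pr.1 := by
      intro pr _
      have h1 := hF l pr.1
      have h2 := (abs_le.mp (hMv pr.1)).1
      linarith
    obtain ⟨pr, hprD, hprmax⟩ := exists_max_cont_sub_lsc hDc hDne g hgcont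
      (fun pr => Mane H B l i y pr.1) (lsc_comp_fst (hlsc l)) (-Mv) hbd
    obtain ⟨xx, zz⟩ := pr
    obtain ⟨hxxD, hzzD⟩ := hprD
    -- maximum value is ≥ 0
    have h00 : (0:ℝ) ≤ g (xx, zz) - Mane H B l i y xx := by
      have h1 := hprmax (y,y)
        ⟨Metric.mem_closedBall_self zero_le_one, Metric.mem_closedBall_self zero_le_one⟩
      have hgyy : g (y,y) = vt l y := by rw [hg]; simp
      rw [hgyy, hFl] at h1
      linarith
    have hgpr : g (xx, zz) = vt l zz - ((n:ℝ)/2)*‖zz - xx‖^2 - Λ*‖xx - y‖^2 := by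
      rw [hg]
      simp only
      rw [quad_inner_eq_norm, quad_inner_eq_norm]
    have hpen : ((n:ℝ)/2) * ‖zz - xx‖^2 + Λ * ‖xx - y‖^2 ≤ vt l zz - vt l xx := by
      have hux := hF l xx
      rw [hgpr] at h00
      linarith
    have hlipzz : vt l zz - vt l xx ≤ (R+1) * ‖zz - xx‖ := hlip vt hvtmem l xx zz
    have hd0 : (0:ℝ) ≤ ‖zz - xx‖ := norm_nonneg _
    have hpen1 : ((n:ℝ)/2) * ‖zz - xx‖^2 ≤ (R+1)*‖zz - xx‖ := by
      linarith [hpen, hlipzz, mul_nonneg hΛpos.le (sq_nonneg ‖xx - y‖)]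
    have hdn : ‖zz - xx‖ ≤ 2*(R+1)/(n:ℝ) := by
      rw [le_div_iff₀ hnpos]
      rcases eq_or_lt_of_le hd0 with h0 | h0
      · rw [← h0]; simp; positivity
      · nlinarith [hpen1, h0]
    have hxy2 : ‖xx - y‖^2 ≤ (2*(R+1)^2/Λ)/(n:ℝ) := by
      have h2 : Λ * ‖xx-y‖^2 ≤ (R+1)*‖zz-xx‖ := by
        linarith [hpen, hlipzz, mul_nonneg (by positivity : (0:ℝ) ≤ (n:ℝ)/2) (sq_nonneg ‖zz-xx‖)]
      have h3 : (R+1)*‖zz-xx‖ ≤ (R+1)*(2*(R+1)/(n:ℝ)) :=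
        mul_le_mul_of_nonneg_left hdn (by linarith)
      rw [le_div_iff₀ hnpos, le_div_iff₀ hΛpos]
      have h4 : Λ * ‖xx-y‖^2 ≤ (R+1)*(2*(R+1)/(n:ℝ)) := le_trans h2 h3
      have h5 : Λ * ‖xx-y‖^2 * (n:ℝ) ≤ (R+1)*(2*(R+1)/(n:ℝ)) * (n:ℝ) :=
        mul_le_mul_of_nonneg_right h4 hnpos.le
      calc ‖xx-y‖^2 * (n:ℝ) * Λ = Λ * ‖xx-y‖^2 * (n:ℝ) := by ring
        _ ≤ (R+1)*(2*(R+1)/(n:ℝ)) * (n:ℝ) := h5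
        _ = 2*(R+1)^2 := by field_simp
    -- interiority
    have hxy : ‖xx - y‖ ≤ 1/2 := by
      have h2 : vt l zz ≤ Mv := le_trans (le_abs_self _) (hMv zz)
      have h3 : -Mv ≤ vt l xx := (abs_le.mp (hMv xx)).1
      have h1 : Λ * ‖xx-y‖^2 ≤ 2*Mv := by
        linarith [hpen, mul_nonneg (by positivity : (0:ℝ) ≤ (n:ℝ)/2) (sq_nonneg ‖zz-xx‖)]
      have h4 : ‖xx-y‖^2 ≤ 1/4 := by
        rw [hΛ] at h1
        nlinarith [h1, hMv0]
      nlinarith [norm_nonneg (xx - y), h4]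
    have hdsmall : ‖zz - xx‖ ≤ 1/4 := by
      have h6 : 2*(R+1)/(n:ℝ) ≤ 1/4 := by
        rw [div_le_iff₀ hnpos]; linarith
      linarith
    have hzzy : ‖zz - y‖ < 1 := by
      have := norm_sub_le_norm_sub_add_norm_sub zz xx y
      linarith
    have hxxy : ‖xx - y‖ < 1 := by linarith
    have hxxnhds : Metric.closedBall y 1 ∈ 𝓝 xx :=
      Filter.mem_of_superset (Metric.isOpen_ball.mem_nhds
        (by simpa [Metric.mem_ball, dist_eq_norm] using hxxy)) Metric.ball_subset_closedBall
    have hzznhds : Metric.closedBall y 1 ∈ 𝓝 zz :=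
      Filter.mem_of_superset (Metric.isOpen_ball.mem_nhds
        (by simpa [Metric.mem_ball, dist_eq_norm] using hzzy)) Metric.ball_subset_closedBall
    -- z-slot : test the subsolution vt
    have hmaxz : IsMaxOn (fun t => vt l t - ((n:ℝ)/2) * ⟪t - xx, t - xx⟫)
        (Metric.closedBall y 1) zz := by
      intro z' hz'
      have h5 := hprmax (xx, z') ⟨hxxD, hz'⟩
      rw [hg] at h5
      simp only at h5
      show vt l z' - ((n:ℝ)/2) * ⟪z' - xx, z' - xx⟫
          ≤ vt l zz - ((n:ℝ)/2) * ⟪zz - xx, zz - xx⟫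
      linarith
    have hlocz : IsLocalMax (fun t => vt l t - ((n:ℝ)/2) * ⟪t - xx, t - xx⟫) zz :=
      hmaxz.isLocalMax hzznhds
    have hsubz := hvtmem.2 l zz (fun t => ((n:ℝ)/2) * ⟪t - xx, t - xx⟫)
      (contDiff_quad _ _) hlocz
    rw [gradient_quad ((n:ℝ)/2) xx zz, show 2*((n:ℝ)/2) = (n:ℝ) by ring] at hsubz
    have hqnorm : ‖(n:ℝ) • (zz - xx)‖ ≤ 2*(R+1) := by
      rw [norm_smul, Real.norm_eq_abs, abs_of_pos hnpos]
      calc (n:ℝ) * ‖zz - xx‖ ≤ (n:ℝ) * (2*(R+1)/(n:ℝ)) :=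
            mul_le_mul_of_nonneg_left hdn hnpos.le
        _ = 2*(R+1) := by field_simp
    -- x-slot : test the supersolution for the Mane function
    have hminx : IsMinOn (fun t => Mane H B l i y t -
        ((-(n:ℝ)/2) * ⟪t - zz, t - zz⟫ + (-Λ) * ⟪t - y, t - y⟫))
        (Metric.closedBall y 1) xx := by
      intro x' hx'
      have h5 := hprmax (x', zz) ⟨hx', hzzD⟩
      rw [hg] at h5
      simp only at h5
      rw [quad_symm zz x', quad_symm zz xx] at h5
      show Mane H B l i y xx -
          ((-(n:ℝ)/2) * ⟪xx - zz, xx - zz⟫ + (-Λ) * ⟪xx - y, xx - y⟫)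
          ≤ Mane H B l i y x' -
          ((-(n:ℝ)/2) * ⟪x' - zz, x' - zz⟫ + (-Λ) * ⟪x' - y, x' - y⟫)
      linarith
    have hlocx : IsLocalMin (fun t => Mane H B l i y t -
        ((-(n:ℝ)/2) * ⟪t - zz, t - zz⟫ + (-Λ) * ⟪t - y, t - y⟫)) xx :=
      hminx.isLocalMin hxxnhds
    have hsupx := hsuper l xx
      (fun t => (-(n:ℝ)/2) * ⟪t - zz, t - zz⟫ + (-Λ) * ⟪t - y, t - y⟫)
      ((contDiff_quad _ _).add (contDiff_quad _ _)) hlocx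
    rw [gradient_quad2 (-(n:ℝ)/2) (-Λ) zz y xx] at hsupx
    have hgradeq : (2*(-(n:ℝ)/2)) • (xx - zz) + (2*(-Λ)) • (xx - y)
        = (n:ℝ) • (zz - xx) - (2*Λ) • (xx - y) := by
      rw [show 2*(-(n:ℝ)/2) = -(n:ℝ) by ring, show 2*(-Λ) = -(2*Λ) by ring,
        neg_smul, neg_smul, ← smul_neg, neg_sub]
      abel
    rw [hgradeq] at hsupx
    -- last exported bound
    have hc6 : Mane H B l i y xx - vt l xx ≤ (R+1) * ‖zz - xx‖ := by
      have h7 : Mane H B l i y xx ≤ vt l zz := by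
        rw [hgpr] at h00
        linarith [mul_nonneg (by positivity : (0:ℝ) ≤ (n:ℝ)/2) (sq_nonneg ‖zz-xx‖),
          mul_nonneg hΛpos.le (sq_nonneg ‖xx-y‖)]
      linarith
    exact ⟨xx, zz, (n:ℝ) • (zz - xx), hdn, hxy2, hqnorm, hsubz, hsupx, hc6⟩
  -- extract sequences
  obtain ⟨n₁, hn₁⟩ := exists_nat_ge (8*(R+1)+1)
  have key2 : ∀ n : ℕ, ∃ xx zz q : Euc N,
      ‖zz - xx‖ ≤ 2*(R+1)/((n:ℝ)+1) ∧
      ‖xx - y‖^2 ≤ (2*(R+1)^2/Λ)/((n:ℝ)+1) ∧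
      ‖q‖ ≤ 2*(R+1) ∧
      H l zz q + (∑ k, B zz l k * vt k zz) ≤ 0 ∧
      0 ≤ H l xx (q - (2*Λ) • (xx - y)) + (∑ k, B xx l k * Mane H B k i y xx) ∧
      Mane H B l i y xx - vt l xx ≤ (R+1) * ‖zz - xx‖ := by
    intro n
    obtain ⟨xx, zz, q, h1, h2, h3, h4, h5, h6⟩ := key (n+n₁+1)
      (by push_cast; nlinarith [Nat.cast_nonneg (α := ℝ) n, hn₁])
    have hden : ((n:ℝ)+1) ≤ ((n+n₁+1 : ℕ) : ℝ) := by
      push_cast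
      nlinarith [Nat.cast_nonneg (α := ℝ) n₁]
    have hden0 : (0:ℝ) < (n:ℝ)+1 := by positivity
    refine ⟨xx, zz, q, le_trans h1 ?_, le_trans h2 ?_, h3, h4, h5, h6⟩
    · exact div_le_div_of_nonneg_left (by linarith) hden0 hden
    · exact div_le_div_of_nonneg_left (by positivity) hden0 hden
  choose xs zs qs P1 P2 P3 P4 P5 P6 using key2
  -- limits
  have hxsb : ∀ n : ℕ, ‖xs n - y‖ ≤ Real.sqrt ((2*(R+1)^2/Λ)/((n:ℝ)+1)) := by
    intro n
    calc ‖xs n - y‖ = Real.sqrt (‖xs n - y‖^2) := (Real.sqrt_sq (norm_nonneg _)).symm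
      _ ≤ _ := Real.sqrt_le_sqrt (P2 n)
  have hxs : Tendsto xs atTop (𝓝 y) :=
    tendsto_of_dist_bound xs y _ (tendsto_sqrt_div_nat (2*(R+1)^2/Λ)) hxsb
  have hzs : Tendsto zs atTop (𝓝 y) := by
    apply tendsto_of_dist_bound zs y
      (fun n => 2*(R+1)/((n:ℝ)+1) + Real.sqrt ((2*(R+1)^2/Λ)/((n:ℝ)+1)))
    · have := (tendsto_div_nat (2*(R+1))).add (tendsto_sqrt_div_nat (2*(R+1)^2/Λ))
      simpa using this
    · intro n
      have h1 := norm_sub_le_norm_sub_add_norm_sub (zs n) (xs n) y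
      have h2 := P1 n
      have h3 := hxsb n
      linarith
  obtain ⟨qb, hqbmem, σ, hσ, hqtend⟩ :=
    (isCompact_closedBall (0:Euc N) (2*(R+1))).tendsto_subseq
      (fun n => by simpa [Metric.mem_closedBall, dist_eq_norm] using P3 n)
  have hσat : Tendsto σ atTop atTop := hσ.tendsto_atTop
  have hxsσ : Tendsto (fun n => xs (σ n)) atTop (𝓝 y) := hxs.comp hσat
  have hzsσ : Tendsto (fun n => zs (σ n)) atTop (𝓝 y) := hzs.comp hσat
  have hpsσ : Tendsto (fun n => qs (σ n) - (2*Λ) • (xs (σ n) - y)) atTop (𝓝 qb) := by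
    have h1 : Tendsto (fun n => xs (σ n) - y) atTop (𝓝 0) := by
      have := hxsσ.sub (tendsto_const_nhds (x := y))
      simpa using this
    have h2 : Tendsto (fun n => (2*Λ) • (xs (σ n) - y)) atTop (𝓝 ((2*Λ) • (0:Euc N))) :=
      h1.const_smul _
    have := hqtend.sub h2
    simpa using this
  have T1 : Tendsto (fun n => H l (zs (σ n)) (qs (σ n))) atTop (𝓝 (H l y qb)) :=
    ((hH l).1.tendsto (y, qb)).comp (hzsσ.prodMk_nhds hqtend)
  have T2 : Tendsto (fun n => H l (xs (σ n)) (qs (σ n) - (2*Λ) • (xs (σ n) - y)))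
      atTop (𝓝 (H l y qb)) :=
    ((hH l).1.tendsto (y, qb)).comp (hxsσ.prodMk_nhds hpsσ)
  have hrowvt : Continuous (fun x => ∑ k, B x l k * vt k x) :=
    continuous_finset_sum _ fun k _ => (hB.1 l k).mul (hvtmem.1.1 k)
  have T3 : Tendsto (fun nn => (∑ k, B (zs (σ nn)) l k * vt k (zs (σ nn)))
      - (∑ k, B (xs (σ nn)) l k * vt k (xs (σ nn)))) atTop (𝓝 0) := by
    have := ((hrowvt.tendsto y).comp hzsσ).sub ((hrowvt.tendsto y).comp hxsσ)
    simpa using this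
  have hEtend : Tendsto (fun nn => H l (zs (σ nn)) (qs (σ nn))
      - H l (xs (σ nn)) (qs (σ nn) - (2*Λ) • (xs (σ nn) - y))
      + ((∑ k, B (zs (σ nn)) l k * vt k (zs (σ nn)))
        - (∑ k, B (xs (σ nn)) l k * vt k (xs (σ nn))))) atTop (𝓝 0) := by
    have := (T1.sub T2).add T3
    simpa using this
  have hGE : ∀ nn, H l (zs (σ nn)) (qs (σ nn))
      - H l (xs (σ nn)) (qs (σ nn) - (2*Λ) • (xs (σ nn) - y))
      + ((∑ k, B (zs (σ nn)) l k * vt k (zs (σ nn)))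
        - (∑ k, B (xs (σ nn)) l k * vt k (xs (σ nn))))
      ≤ ∑ k, B (xs (σ nn)) l k * (Mane H B k i y (xs (σ nn)) - vt k (xs (σ nn))) := by
    intro nn
    have h4 := P4 (σ nn)
    have h5 := P5 (σ nn)
    have hGsplit : ∑ k, B (xs (σ nn)) l k * (Mane H B k i y (xs (σ nn)) - vt k (xs (σ nn)))
        = (∑ k, B (xs (σ nn)) l k * Mane H B k i y (xs (σ nn)))
          - (∑ k, B (xs (σ nn)) l k * vt k (xs (σ nn))) := by
      rw [← Finset.sum_sub_distrib]
      apply Finset.sum_congr rfl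
      intros
      ring
    rw [hGsplit]
    linarith
  -- eventual upper bound
  have hevup : ∀ᶠ nn in atTop,
      ∑ k, B (xs (σ nn)) l k * (Mane H B k i y (xs (σ nn)) - vt k (xs (σ nn)))
      ≤ βB * ((R+1) * (2*(R+1)/(((σ nn):ℝ)+1))) + -(μ/2) * (θ/2) := by
    filter_upwards [hxsσ.eventually hev1, hxsσ.eventually hev2] with nn h1 h2
    have hbound : ∀ k ∈ Finset.univ,
        B (xs (σ nn)) l k * (Mane H B k i y (xs (σ nn)) - vt k (xs (σ nn)))
        ≤ (if k = l then βB * ((R+1) * (2*(R+1)/(((σ nn):ℝ)+1))) else 0)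
          + (if k = j then -(μ/2) * (θ/2) else 0) := by
      intro k _
      rcases eq_or_ne k l with rfl | hkl
      · rw [if_pos rfl, if_neg (fun h => hjl h.symm)]
        have hR1 : (0:ℝ) ≤ R+1 := by linarith
        have hFb : Mane H B k i y (xs (σ nn)) - vt k (xs (σ nn))
            ≤ (R+1) * (2*(R+1)/(((σ nn):ℝ)+1)) :=
          le_trans (P6 (σ nn)) (mul_le_mul_of_nonneg_left (P1 (σ nn)) hR1)
        have hBle : B (xs (σ nn)) k k ≤ βB := le_trans (le_abs_self _) (hβB _ k k)
        have hF0 := hFnonneg k (xs (σ nn))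
        have step1 : B (xs (σ nn)) k k * (Mane H B k i y (xs (σ nn)) - vt k (xs (σ nn)))
            ≤ βB * (Mane H B k i y (xs (σ nn)) - vt k (xs (σ nn))) :=
          mul_le_mul_of_nonneg_right hBle hF0
        have step2 : βB * (Mane H B k i y (xs (σ nn)) - vt k (xs (σ nn)))
            ≤ βB * ((R+1) * (2*(R+1)/(((σ nn):ℝ)+1))) :=
          mul_le_mul_of_nonneg_left hFb hβB0
        linarith
      rcases eq_or_ne k j with rfl | hkj
      · rw [if_neg hkl, if_pos rfl]
        have hF2 := hFnonneg k (xs (σ nn))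
        have step1 : B (xs (σ nn)) l k * (Mane H B k i y (xs (σ nn)) - vt k (xs (σ nn)))
            ≤ -(μ/2) * (Mane H B k i y (xs (σ nn)) - vt k (xs (σ nn))) :=
          mul_le_mul_of_nonneg_right h2.le hF2
        have step2 : -(μ/2) * (Mane H B k i y (xs (σ nn)) - vt k (xs (σ nn)))
            ≤ -(μ/2) * (θ/2) :=
          mul_le_mul_of_nonpos_left h1.le (by linarith)
        linarith
      · rw [if_neg hkl, if_neg hkj]
        have hBk : B (xs (σ nn)) l k ≤ 0 := (hB.2.2 _).1.1 l k hkl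
        have h9 : B (xs (σ nn)) l k * (Mane H B k i y (xs (σ nn)) - vt k (xs (σ nn))) ≤ 0 :=
          mul_nonpos_iff.mpr (Or.inr ⟨hBk, hFnonneg k _⟩)
        linarith
    have hsum := Finset.sum_le_sum hbound
    rw [Finset.sum_add_distrib] at hsum
    rw [Finset.sum_ite_eq' Finset.univ l
      (fun _ => βB * ((R+1) * (2*(R+1)/(((σ nn):ℝ)+1))))] at hsum
    rw [Finset.sum_ite_eq' Finset.univ j (fun _ => -(μ/2) * (θ/2))] at hsum
    simpa using hsum
  -- final contradiction
  have hμθ : 0 < μ * θ := mul_pos hμpos hθpos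
  have hfin1 : ∀ᶠ nn in atTop, -(μ*θ)/32 < H l (zs (σ nn)) (qs (σ nn))
      - H l (xs (σ nn)) (qs (σ nn) - (2*Λ) • (xs (σ nn) - y))
      + ((∑ k, B (zs (σ nn)) l k * vt k (zs (σ nn)))
        - (∑ k, B (xs (σ nn)) l k * vt k (xs (σ nn)))) :=
    hEtend.eventually_const_lt (by nlinarith)
  have hfin2 : ∀ᶠ nn in atTop,
      βB * ((R+1) * (2*(R+1)/(((σ nn):ℝ)+1))) < (μ*θ)/32 := by
    have hb : Tendsto (fun nn => βB * ((R+1) * (2*(R+1)/(((σ nn):ℝ)+1)))) atTop (𝓝 0) := by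
      have h1 := (tendsto_div_nat (2*(R+1))).comp hσat
      have h2 := Filter.Tendsto.const_mul βB (Filter.Tendsto.const_mul (R+1) h1)
      simpa using h2
    exact hb.eventually_lt_const (by nlinarith)
  obtain ⟨nn, hA1, hA2, hA3⟩ := (hfin1.and (hfin2.and hevup)).exists
  have := hGE nn
  nlinarith [hA1, hA2, hA3, this, hμθ]

end helpers

set_option maxHeartbeats 1000000 in
/-- rigidity on the Aubry set — any two critical subsolutions
differ by a multiple of `𝟙` at each point of the Aubry set. -/
theorem stmt17 {N m : ℕ} (hN : 0 < N) (hm : 0 < m)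
    (H : Fin m → Euc N → Euc N → ℝ) (hH : ∀ i, IsConvexHamiltonian (H i))
    (B : Euc N → Fin m → Fin m → ℝ) (hB : IsCouplingField B)
    (hcrit : IsLeast {a : ℝ | HasSubSol H B a} 0) (y : Euc N) (hy : y ∈ MAubry H B) (i : Fin m) :
    (∀ v ∈ Crit H B, ∀ k : Fin m, v k y = Mane H B k i y y + v i y) ∧
    (∀ v ∈ Crit H B, ∀ w ∈ Crit H B, ∃ c : ℝ, ∀ k : Fin m, v k y - w k y = c) := by
  -- constants
  obtain ⟨A, hA0, hA⟩ := ham_lower_bound H hH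
  obtain ⟨c₀, hc₀pos, hc₀⟩ := quant_irred hm B hB
  obtain ⟨βB, hβB0, hβB⟩ := coupling_bound B hB
  have hK0 : 0 ≤ A / c₀ := div_nonneg hA0 hc₀pos.le
  have hosc : ∀ v ∈ Crit H B, ∀ (x : Euc N) (a b : Fin m), v a x - v b x ≤ A / c₀ := by
    intro v hv x a b
    obtain ⟨l, hl⟩ := hc₀ x (fun k => v k x) a b
    have hrow := crit_row_le hB hA hv l x
    rw [le_div_iff₀ hc₀pos]
    have := le_trans hl hrow
    linarith
  obtain ⟨R, hR0, hRrad⟩ := ham_coercive_radius H hH (m * (βB * (A / c₀)))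
  have htouch : ∀ v ∈ Crit H B, ∀ (l : Fin m) (z : Euc N) (φ : Euc N → ℝ), ContDiff ℝ 1 φ →
      IsLocalMax (fun t => v l t - φ t) z → ‖gradient φ z‖ ≤ R := by
    intro v hv l z φ hφ hmax
    exact hRrad l z _ (crit_touch_bound hB hβB hosc hv l z φ hφ hmax)
  have hlip : ∀ v ∈ Crit H B, ∀ (l : Fin m) (x x' : Euc N),
      v l x' - v l x ≤ (R+1) * ‖x' - x‖ := by
    intro v hv l x x'
    obtain ⟨M, hM0, hM⟩ := periodic_bound (hv.1.1 l) (hv.1.2 l)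
    exact lip_of_touch (v l) (hv.1.1 l) M hM0 hM R hR0 (htouch v hv l) x x'
  obtain ⟨v₀, hv₀t, hv₀s⟩ := hcrit.1
  have hCne : (Crit H B).Nonempty := ⟨v₀, hv₀t, hv₀s⟩
  have hbdd : ∀ (l : Fin m) (x : Euc N), BddAbove ((fun v => v l x - v i y) '' Crit H B) := by
    intro l x
    refine ⟨A / c₀ + (R+1) * ‖x - y‖, ?_⟩
    rintro s ⟨v, hv, rfl⟩
    have h1 : v l x - v i x ≤ A / c₀ := hosc v hv x l i
    have h2 : v i x - v i y ≤ (R+1) * ‖x - y‖ := hlip v hv i y x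
    simp only
    linarith
  have hmane_le : ∀ v ∈ Crit H B, ∀ (l : Fin m) (x : Euc N),
      v l x - v i y ≤ Mane H B l i y x :=
    fun v hv l x => le_csSup (hbdd l x) ⟨v, hv, rfl⟩
  have hMii : Mane H B i i y y = 0 := by
    have himage : (fun v : Fin m → Euc N → ℝ => v i y - v i y) '' Crit H B = {0} := by
      apply Set.eq_singleton_iff_nonempty_unique_mem.mpr
      refine ⟨hCne.image _, ?_⟩
      rintro s ⟨v, hv, rfl⟩
      simp
    show sSup ((fun v : Fin m → Euc N → ℝ => v i y - v i y) '' Crit H B) = 0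
    rw [himage]
    exact csSup_singleton 0
  -- main rigidity
  have main : ∀ v ∈ Crit H B, ∀ k : Fin m, v k y = Mane H B k i y y + v i y := by
    intro v hv k
    set vt : Fin m → Euc N → ℝ := fun j x => v j x + (-(v i y)) with hvt
    have hvtmem : vt ∈ Crit H B := crit_shift hB hv (-(v i y))
    have hvtiy : vt i y = 0 := by rw [hvt]; simp
    have hF : ∀ (l : Fin m) (x : Euc N), vt l x ≤ Mane H B l i y x := by
      intro l x
      have := hmane_le vt hvtmem l x
      rw [hvtiy] at this
      linarith
    set J : Finset (Fin m) := Finset.univ.filter (fun k => Mane H B k i y y ≤ vt k y) with hJ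
    have hJmem : ∀ k, k ∈ J ↔ Mane H B k i y y = vt k y := by
      intro k
      simp only [hJ, Finset.mem_filter, Finset.mem_univ, true_and]
      exact ⟨fun h => le_antisymm h (hF k y), fun h => le_of_eq h⟩
    have hiJ : i ∈ J := by
      rw [hJmem, hvtiy]
      exact hMii
    have hclosure : ∀ l ∈ J, ∀ j : Fin m, B y l j ≠ 0 → j ∈ J := by
      intro l hlJ j hBj
      rcases eq_or_ne j l with rfl | hjl
      · exact hlJ
      rw [hJmem]
      refine le_antisymm ?_ (hF j y)
      exact doubling_step H hH B hB y i (hy i).2 hCne hR0 hβB hbdd hlip hvtmem hvtiy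
        l j hjl ((hJmem l).mp hlJ) hBj
    have hJuniv : J = Finset.univ := by
      by_contra hconJ
      obtain ⟨l, hlJ, j, hjJ, hBj⟩ := (hB.2.2 y).2.2 J ⟨i, hiJ⟩ hconJ
      exact hjJ (hclosure l hlJ j hBj)
    have hkJ : k ∈ J := hJuniv ▸ Finset.mem_univ k
    have hfin := (hJmem k).mp hkJ
    rw [hvt] at hfin
    simp only at hfin
    linarith
  refine ⟨main, fun v hv w hw => ⟨v i y - w i y, fun k => ?_⟩⟩
  rw [main v hv k, main w hw k]
  ring


end
end
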